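/- arXiv:1708.01821 — 8 statements merged into one kernel-verified Lean document; each statement's English description precedes it below -/
import Mathlib

section
/- Let G and G' be graphs, let A∈S(G) and A'∈S(G') be real symmetric matrices each with every diagonal entry nonzero. Then A⊗A' belongs to S(G⊠G'), where G⊠G' is the strong product of graphs. -/
open Matrix Kronecker

/-- `S(G)`: real symmetric matrices whose off-diagonal nonzero pattern is the edge set of `G`. -/
def inS {V : Type*} (G : SimpleGraph V) (A : Matrix V V ℝ) : Prop :=
  A.IsSymm ∧ ∀ i j, i ≠ j → (A i j ≠ 0 ↔ G.Adj i j)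

/-- The strong product of two simple graphs. -/
def strongProd {V W : Type*} (G : SimpleGraph V) (G' : SimpleGraph W) :
    SimpleGraph (V × W) where
  Adj p q := (p.1 = q.1 ∧ G'.Adj p.2 q.2) ∨ (p.2 = q.2 ∧ G.Adj p.1 q.1) ∨
      (G.Adj p.1 q.1 ∧ G'.Adj p.2 q.2)
  symm := by
    constructor
    rintro p q (⟨h1, h2⟩ | ⟨h1, h2⟩ | ⟨h1, h2⟩)
    · exact Or.inl ⟨h1.symm, h2.symm⟩
    · exact Or.inr (Or.inl ⟨h1.symm, h2.symm⟩)
    · exact Or.inr (Or.inr ⟨h1.symm, h2.symm⟩)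
  loopless := by
    constructor
    rintro p (⟨-, h⟩ | ⟨-, h⟩ | ⟨h, -⟩)
    · exact G'.irrefl h
    · exact G.irrefl h
    · exact G.irrefl h

theorem stmt3 {n n' : ℕ} (G : SimpleGraph (Fin n)) (G' : SimpleGraph (Fin n'))
    (A : Matrix (Fin n) (Fin n) ℝ) (A' : Matrix (Fin n') (Fin n') ℝ)
    (hA : inS G A) (hA' : inS G' A')
    (hdiag : ∀ i, A i i ≠ 0) (hdiag' : ∀ i, A' i i ≠ 0) :
    inS (strongProd G G') (A ⊗ₖ A') := by
  obtain ⟨hAs, hAp⟩ := hA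
  obtain ⟨hA's, hA'p⟩ := hA'
  constructor
  · ext ⟨i, i'⟩ ⟨j, j'⟩
    simp only [Matrix.transpose_apply, Matrix.kroneckerMap_apply]
    rw [← hAs.apply i j, ← hA's.apply i' j']
  · rintro ⟨i, i'⟩ ⟨j, j'⟩ hne
    simp only [Matrix.kroneckerMap_apply, mul_ne_zero_iff, strongProd]
    constructor
    · rintro ⟨h1, h2⟩
      by_cases hij : i = j
      · subst hij
        have hi' : i' ≠ j' := fun h => hne (by simp [h])
        exact Or.inl ⟨rfl, (hA'p i' j' hi').mp h2⟩
      · by_cases hi' : i' = j'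
        · subst hi'
          exact Or.inr (Or.inl ⟨rfl, (hAp i j hij).mp h1⟩)
        · exact Or.inr (Or.inr ⟨(hAp i j hij).mp h1, (hA'p i' j' hi').mp h2⟩)
    · rintro (⟨h1, h2⟩ | ⟨h1, h2⟩ | ⟨h1, h2⟩)
      · subst h1
        exact ⟨hdiag i, (hA'p i' j' h2.ne).mpr h2⟩
      · subst h1
        exact ⟨(hAp i j h2.ne).mpr h2, hdiag' i'⟩
      · exact ⟨(hAp i j h1.ne).mpr h1, (hA'p i' j' h2.ne).mpr h2⟩
end

section
/- Let A be an n×n real symmetric matrix with -dev(A)=dev(A), i.e., the set of distinct eigenvalues of A is symmetric about 0, and suppose 0 is not an eigenvalue of A. Let M be the 4n×4n block matrix [[A,I,0,-I],[I,-A,I,0],[0,I,A,I],[-I,0,I,-A]]. Then M² is block diagonal with each diagonal block equal to A²+2I, and the number of distinct eigenvalues of M is at most the number of distinct eigenvalues of A. -/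
open Matrix Kronecker

/-- Membership in the spectrum of a real matrix via vanishing of the characteristic
determinant. -/
lemma mem_spec_iff_det' {m : Type*} [Fintype m] [DecidableEq m] (X : Matrix m m ℝ) (μ : ℝ) :
    μ ∈ spectrum ℝ X ↔ (μ • (1 : Matrix m m ℝ) - X).det = 0 := by
  rw [spectrum.mem_iff, Matrix.isUnit_iff_isUnit_det, isUnit_iff_ne_zero, not_not,
    Algebra.algebraMap_eq_smul_one]

lemma sq_mem_spec' {m : Type*} [Fintype m] [DecidableEq m] (X : Matrix m m ℝ) (μ : ℝ)
    (h : μ ∈ spectrum ℝ X) : μ ^ 2 ∈ spectrum ℝ (X * X) := by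
  rw [mem_spec_iff_det'] at h ⊢
  have key : (μ ^ 2) • (1 : Matrix m m ℝ) - X * X
      = (μ • 1 - X) * (μ • 1 + X) := by
    simp only [sub_mul, mul_add, Matrix.smul_mul, Matrix.mul_smul, smul_smul, one_mul, mul_one,
      sq]
    abel
  rw [key, Matrix.det_mul, h, zero_mul]

lemma spec_one_kron' {n : ℕ} (C : Matrix (Fin n) (Fin n) ℝ) (μ : ℝ)
    (h : μ ∈ spectrum ℝ ((1 : Matrix (Fin 4) (Fin 4) ℝ) ⊗ₖ C)) : μ ∈ spectrum ℝ C := by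
  rw [mem_spec_iff_det'] at h ⊢
  have key : μ • (1 : Matrix (Fin 4 × Fin n) (Fin 4 × Fin n) ℝ)
        - (1 : Matrix (Fin 4) (Fin 4) ℝ) ⊗ₖ C
      = (1 : Matrix (Fin 4) (Fin 4) ℝ) ⊗ₖ (μ • (1 : Matrix (Fin n) (Fin n) ℝ) - C) := by
    ext ⟨i, j⟩ ⟨k, l⟩
    simp only [Matrix.sub_apply, Matrix.smul_apply, one_apply, kroneckerMap_apply, smul_eq_mul, Prod.mk.injEq]
    by_cases hik : i = k <;> simp [hik]
  rw [key, det_kronecker, det_one, one_pow, one_mul] at h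
  exact pow_eq_zero_iff (by norm_num) |>.mp h

lemma spec_sq_add' {n : ℕ} (A : Matrix (Fin n) (Fin n) ℝ) (hA : A.IsSymm) (μ : ℝ)
    (h : μ ∈ spectrum ℝ (A * A + 2 • (1 : Matrix (Fin n) (Fin n) ℝ))) :
    ∃ lam ∈ spectrum ℝ A, μ = lam ^ 2 + 2 := by
  rw [mem_spec_iff_det'] at h
  have h21 : (2 : ℕ) • (1 : Matrix (Fin n) (Fin n) ℝ) = (2 : ℝ) • 1 := by
    rw [two_smul, two_smul]
  rw [h21] at h
  by_cases hmu : 2 ≤ μ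
  · set s := Real.sqrt (μ - 2) with hs
    have hs2 : s ^ 2 = μ - 2 := Real.sq_sqrt (by linarith)
    have key : μ • (1 : Matrix (Fin n) (Fin n) ℝ) - (A * A + (2 : ℝ) • 1)
        = (s • 1 - A) * (s • 1 + A) := by
      have e : (s • (1 : Matrix (Fin n) (Fin n) ℝ) - A) * (s • 1 + A)
          = (s * s) • 1 + s • A - (s • A + A * A) := by
        simp only [sub_mul, mul_add, Matrix.smul_mul, Matrix.mul_smul, smul_sub, smul_smul,
          one_mul, mul_one]
        abel
      rw [e, show s * s = μ - 2 from by nlinarith]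
      module
    rw [key, Matrix.det_mul, mul_eq_zero] at h
    rcases h with h | h
    · exact ⟨s, (mem_spec_iff_det' A s).mpr h, by nlinarith⟩
    · refine ⟨-s, (mem_spec_iff_det' A (-s)).mpr ?_, by nlinarith⟩
      have e : (-s) • (1 : Matrix (Fin n) (Fin n) ℝ) - A = (-1 : ℝ) • (s • 1 + A) := by
        module
      rw [e, Matrix.det_smul, h, mul_zero]
  · exfalso
    push_neg at hmu
    have hpsd : (A * A).PosSemidef := by
      have := Matrix.posSemidef_conjTranspose_mul_self A
      rwa [show Aᴴ = A by rw [conjTranspose_eq_transpose_of_trivial]; exact hA] at this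
    have hpd : ((A * A) + (2 - μ) • (1 : Matrix (Fin n) (Fin n) ℝ)).PosDef := by
      apply Matrix.PosDef.posSemidef_add hpsd
      rw [smul_one_eq_diagonal]
      exact Matrix.PosDef.diagonal (fun i => by linarith)
    refine ne_of_gt hpd.det_pos ?_
    have e : (A * A) + (2 - μ) • (1 : Matrix (Fin n) (Fin n) ℝ)
        = (-1 : ℝ) • (μ • (1 : Matrix (Fin n) (Fin n) ℝ) - (A * A + (2 : ℝ) • 1)) := by
      module
    rw [e, Matrix.det_smul, h, mul_zero]

set_option maxHeartbeats 1600000 in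
theorem stmt4 {n : ℕ} (A : Matrix (Fin n) (Fin n) ℝ) (hA : A.IsSymm)
    (hsym : -(spectrum ℝ A) = spectrum ℝ A) (h0 : (0 : ℝ) ∉ spectrum ℝ A)
    (B : Matrix (Fin 4) (Fin 4) ℝ) (hB : B = !![0,1,0,-1; 1,0,1,0; 0,1,0,1; -1,0,1,0])
    (D : Matrix (Fin 4) (Fin 4) ℝ) (hD : D = Matrix.diagonal ![1,-1,1,-1])
    (M : Matrix (Fin 4 × Fin n) (Fin 4 × Fin n) ℝ)
    (hM : M = B ⊗ₖ (1 : Matrix (Fin n) (Fin n) ℝ) + D ⊗ₖ A) :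
    M * M = (1 : Matrix (Fin 4) (Fin 4) ℝ) ⊗ₖ (A * A + 2 • (1 : Matrix (Fin n) (Fin n) ℝ)) ∧
      (spectrum ℝ M).ncard ≤ (spectrum ℝ A).ncard := by
  have hD' : D = !![1,0,0,0; 0,-1,0,0; 0,0,1,0; 0,0,0,-1] := by
    rw [hD]; ext i j
    fin_cases i <;> fin_cases j <;>
      simp [Matrix.diagonal_apply, Matrix.vecHead, Matrix.vecTail]
  have hBB : B * B = (2 : ℝ) • 1 := by
    rw [hB]; ext i j
    fin_cases i <;> fin_cases j <;>
      norm_num [Matrix.mul_apply, Fin.sum_univ_four, Matrix.one_apply, Fin.ext_iff, Matrix.cons_val_two, Matrix.cons_val_three]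
  have hDD : D * D = 1 := by
    rw [hD']; ext i j
    fin_cases i <;> fin_cases j <;>
      norm_num [Matrix.mul_apply, Fin.sum_univ_four, Matrix.one_apply, Fin.ext_iff,
        Matrix.vecHead, Matrix.vecTail, Matrix.cons_val_two, Matrix.cons_val_three]
  have hBD : B * D + D * B = 0 := by
    rw [hB, hD']; ext i j
    fin_cases i <;> fin_cases j <;>
      norm_num [Matrix.mul_apply, Fin.sum_univ_four, Fin.ext_iff,
        Matrix.vecHead, Matrix.vecTail, Matrix.cons_val_two, Matrix.cons_val_three]
  have part1 : M * M
      = (1 : Matrix (Fin 4) (Fin 4) ℝ) ⊗ₖ (A * A + 2 • (1 : Matrix (Fin n) (Fin n) ℝ)) := by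
    rw [hM, add_mul, mul_add, mul_add, ← mul_kronecker_mul, ← mul_kronecker_mul,
      ← mul_kronecker_mul, ← mul_kronecker_mul]
    simp only [Matrix.one_mul, Matrix.mul_one]
    have hz : (B * D) ⊗ₖ A + (D * B) ⊗ₖ A = 0 := by
      rw [← add_kronecker, hBD, zero_kronecker]
    have step : ∀ w x y z : Matrix (Fin 4 × Fin n) (Fin 4 × Fin n) ℝ,
        w + x + (y + z) = w + z + (x + y) := by intros; abel
    rw [step, hz, add_zero, hBB, hDD,
      smul_kronecker, one_kronecker_one, kronecker_add, kronecker_smul, one_kronecker_one]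
    have : (2 : ℝ) • (1 : Matrix (Fin 4 × Fin n) (Fin 4 × Fin n) ℝ) = (2 : ℕ) • 1 := by
      rw [two_smul, two_smul]
    rw [this]
    abel
  refine ⟨part1, ?_⟩
  -- every eigenvalue μ of M satisfies μ² = λ² + 2 for some eigenvalue λ of A
  have key : ∀ μ ∈ spectrum ℝ M, ∃ lam ∈ spectrum ℝ A, μ ^ 2 = lam ^ 2 + 2 := by
    intro μ hμ
    have h1 := sq_mem_spec' M μ hμ
    rw [part1] at h1
    exact spec_sq_add' A hA _ (spec_one_kron' _ _ h1)
  have hneg : ∀ x ∈ spectrum ℝ A, -x ∈ spectrum ℝ A := by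
    intro x hx
    rw [← hsym, Set.mem_neg, neg_neg]; exact hx
  set g : ℝ → ℝ := fun μ => (if 0 < μ then (1 : ℝ) else -1) * Real.sqrt (μ ^ 2 - 2) with hg
  have hmaps : ∀ μ ∈ spectrum ℝ M, g μ ∈ spectrum ℝ A := by
    intro μ hμ
    obtain ⟨lam, hl, he⟩ := key μ hμ
    have hl0 : lam ≠ 0 := fun h => h0 (h ▸ hl)
    have hsqrt : Real.sqrt (μ ^ 2 - 2) = |lam| := by
      rw [show μ ^ 2 - 2 = lam ^ 2 by linarith, Real.sqrt_sq_eq_abs]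
    have habs : |lam| ∈ spectrum ℝ A := by
      rcases abs_cases lam with ⟨h, _⟩ | ⟨h, _⟩
      · rwa [h]
      · rw [h]; exact hneg lam hl
    by_cases hμ0 : 0 < μ <;> simp only [hg, hμ0, if_true, if_false, one_mul, neg_one_mul, hsqrt]
    · exact habs
    · exact hneg _ habs
  have hinj : Set.InjOn g (spectrum ℝ M) := by
    intro μ1 h1 μ2 h2 he
    obtain ⟨l1, hl1, he1⟩ := key μ1 h1
    obtain ⟨l2, hl2, he2⟩ := key μ2 h2
    have hl10 : l1 ≠ 0 := fun h => h0 (h ▸ hl1)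
    have hl20 : l2 ≠ 0 := fun h => h0 (h ▸ hl2)
    have hp1 : 0 < l1 ^ 2 := lt_of_le_of_ne (sq_nonneg l1)
      fun h => hl10 (pow_eq_zero_iff two_ne_zero |>.mp h.symm)
    have hp2 : 0 < l2 ^ 2 := lt_of_le_of_ne (sq_nonneg l2)
      fun h => hl20 (pow_eq_zero_iff two_ne_zero |>.mp h.symm)
    have hq1 : 0 < μ1 ^ 2 - 2 := by nlinarith
    have hq2 : 0 < μ2 ^ 2 - 2 := by nlinarith
    have s1 : 0 < Real.sqrt (μ1 ^ 2 - 2) := Real.sqrt_pos.mpr hq1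
    have s2 : 0 < Real.sqrt (μ2 ^ 2 - 2) := Real.sqrt_pos.mpr hq2
    have hμ1ne : μ1 ≠ 0 := fun h => by rw [h] at hq1; norm_num at hq1
    have hμ2ne : μ2 ≠ 0 := fun h => by rw [h] at hq2; norm_num at hq2
    have hsqeq : Real.sqrt (μ1 ^ 2 - 2) = Real.sqrt (μ2 ^ 2 - 2) → μ1 ^ 2 = μ2 ^ 2 := by
      intro hs
      have := congrArg (· ^ 2) hs
      simp only [Real.sq_sqrt hq1.le, Real.sq_sqrt hq2.le] at this
      linarith
    by_cases c1 : 0 < μ1 <;> by_cases c2 : 0 < μ2 <;>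
      simp only [hg, c1, c2, if_true, if_false, one_mul, neg_one_mul, neg_inj] at he
    · have h12 := hsqeq he
      rcases sq_eq_sq_iff_eq_or_eq_neg.mp h12 with h | h
      · exact h
      · exfalso; rw [h] at c1; linarith
    · exfalso; linarith
    · exfalso; linarith
    · have h12 := hsqeq he
      rcases sq_eq_sq_iff_eq_or_eq_neg.mp h12 with h | h
      · exact h
      · exfalso
        push_neg at c1 c2
        have : μ1 = 0 := le_antisymm c1 (by rw [h]; linarith)
        exact hμ1ne this
  calc (spectrum ℝ M).ncard = (g '' spectrum ℝ M).ncard :=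
        (Set.ncard_image_of_injOn hinj).symm
    _ ≤ (spectrum ℝ A).ncard := by
        refine Set.ncard_le_ncard ?_ (Matrix.finite_spectrum A)
        rintro _ ⟨μ, hμ, rfl⟩
        exact hmaps μ hμ
end

section
/- Let A be a real symmetric n×n matrix with zero diagonal such that dev(A) = -dev(A). Let B be the 4×4 matrix with rows (0,1,0,-1),(1,0,1,0),(0,1,0,1),(-1,0,1,0). Then (1/√2)·(B⊗A) squared equals the block diagonal matrix with four copies of A², and consequently every eigenvalue of (1/√2)(B⊗A) lies in dev(A)∪(−dev(A)) = dev(A), so (1/√2)(B⊗A) has at most as many distinct eigenvalues as A. -/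
open Matrix Kronecker

noncomputable def kronOne {n : ℕ} :
    Matrix (Fin n) (Fin n) ℝ →ₐ[ℝ] Matrix (Fin 4 × Fin n) (Fin 4 × Fin n) ℝ where
  toFun C := (1 : Matrix (Fin 4) (Fin 4) ℝ) ⊗ₖ C
  map_one' := Matrix.one_kronecker_one
  map_mul' C D := by rw [← Matrix.mul_kronecker_mul, one_mul]
  map_zero' := by simp
  map_add' C D := Matrix.kronecker_add _ _ _
  commutes' r := by
    have h : (1 : Matrix (Fin 4) (Fin 4) ℝ) ⊗ₖ (algebraMap ℝ (Matrix (Fin n) (Fin n) ℝ) r)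
        = algebraMap ℝ (Matrix (Fin 4 × Fin n) (Fin 4 × Fin n) ℝ) r := by
      rw [Algebra.algebraMap_eq_smul_one, Algebra.algebraMap_eq_smul_one,
        Matrix.kronecker_smul, Matrix.one_kronecker_one]
    exact h

theorem stmt5 {n : ℕ} (A : Matrix (Fin n) (Fin n) ℝ) (hA : A.IsSymm)
    (hdiag : ∀ i, A i i = 0) (hdev : -(spectrum ℝ A) = spectrum ℝ A)
    (B : Matrix (Fin 4) (Fin 4) ℝ) (hB : B = !![0,1,0,-1; 1,0,1,0; 0,1,0,1; -1,0,1,0])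
    (M : Matrix (Fin 4 × Fin n) (Fin 4 × Fin n) ℝ)
    (hM : M = (Real.sqrt 2)⁻¹ • (B ⊗ₖ A)) :
    M * M = (1 : Matrix (Fin 4) (Fin 4) ℝ) ⊗ₖ (A * A) ∧
      spectrum ℝ M ⊆ spectrum ℝ A ∧
      (spectrum ℝ M).ncard ≤ (spectrum ℝ A).ncard := by
  have hBB : B * B = (2 : ℝ) • (1 : Matrix (Fin 4) (Fin 4) ℝ) := by
    subst hB
    ext i j
    fin_cases i <;> fin_cases j <;>
      simp [Matrix.mul_apply, Fin.sum_univ_four, Matrix.one_apply] <;> norm_num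
  have hsq : (Real.sqrt 2)⁻¹ * (Real.sqrt 2)⁻¹ = 2⁻¹ := by
    rw [← mul_inv, Real.mul_self_sqrt (by norm_num)]
  have hMM : M * M = (1 : Matrix (Fin 4) (Fin 4) ℝ) ⊗ₖ (A * A) := by
    rw [hM, smul_mul_smul_comm, hsq, ← Matrix.mul_kronecker_mul, hBB,
      Matrix.smul_kronecker, smul_smul]
    norm_num
  have hsub : spectrum ℝ M ⊆ spectrum ℝ A := by
    intro μ hμ
    have h1 : μ ^ 2 ∈ spectrum ℝ (M ^ 2) := by
      have := spectrum.subset_polynomial_aeval M (Polynomial.X ^ 2 : Polynomial ℝ)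
      simpa using this ⟨μ, hμ, by simp⟩
    have h2 : μ ^ 2 ∈ spectrum ℝ (A * A) := by
      have h3 : M ^ 2 = kronOne (A * A) := by
        rw [pow_two, hMM]; rfl
      rw [h3] at h1
      exact AlgHom.spectrum_apply_subset kronOne (A * A) h1
    rw [spectrum.mem_iff] at h2
    have hfac : algebraMap ℝ (Matrix (Fin n) (Fin n) ℝ) (μ ^ 2) - A * A
        = (algebraMap ℝ _ μ - A) * (algebraMap ℝ _ μ + A) := by
      rw [pow_two, _root_.map_mul, sub_mul, mul_add, mul_add, Algebra.commutes μ A]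
      abel
    rw [hfac] at h2
    have : ¬IsUnit (algebraMap ℝ (Matrix (Fin n) (Fin n) ℝ) μ - A) ∨
        ¬IsUnit (algebraMap ℝ (Matrix (Fin n) (Fin n) ℝ) μ + A) := by
      by_contra h
      push_neg at h
      exact h2 (h.1.mul h.2)
    rcases this with h | h
    · exact spectrum.mem_iff.mpr h
    · have hmem : -μ ∈ spectrum ℝ A := by
        rw [spectrum.mem_iff]
        intro hu
        apply h
        have heq : algebraMap ℝ (Matrix (Fin n) (Fin n) ℝ) μ + A
            = -(algebraMap ℝ (Matrix (Fin n) (Fin n) ℝ) (-μ) - A) := by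
          simp [add_comm]
        rw [heq]
        exact hu.neg
      rw [← hdev]
      exact Set.mem_neg.mpr hmem
  exact ⟨hMM, hsub, Set.ncard_le_ncard hsub (A.finite_spectrum)⟩
end

section
/- The matrix A whose only nonzero off-diagonal entries are ones connecting consecutive blocks as in a clique-path, namely the block tridiagonal matrix built from J_{n₁−1}, scalars 2 at summing vertices, J_{n_i−2} blocks and all-ones coupling vectors (as in the clique-path construction), is a real symmetric matrix in S(KP(n₁,…,n_s)) of rank s; consequently q(KP(n₁,…,n_s)) ≤ s+1. -/
open Matrix

/-- `q(G)`: the minimum number of distinct eigenvalues among matrices in `S(G)`. -/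
noncomputable def qGraph {V : Type*} [Fintype V] [DecidableEq V] (G : SimpleGraph V) : ℕ :=
  sInf {k : ℕ | ∃ A : Matrix V V ℝ, inS G A ∧ (spectrum ℝ A).ncard = k}

/-- The graph whose edges are pairs of distinct vertices lying in a common clique `K i`. -/
def cliqueUnionGraph {V : Type*} (s : ℕ) (K : Fin s → Finset V) : SimpleGraph V where
  Adj u v := u ≠ v ∧ ∃ i, u ∈ K i ∧ v ∈ K i
  symm := ⟨by rintro u v ⟨h, i, hu, hv⟩; exact ⟨h.symm, i, hv, hu⟩⟩
  loopless := ⟨fun u h => h.1 rfl⟩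

/-- The matrix `A = Σᵢ 𝟙_{K i} 𝟙_{K i}ᵀ` used for clique-paths: its `(u,v)` entry is the
number of cliques containing both `u` and `v`.  For a clique-path this is `J_{n₁-1}` etc.
block tridiagonal with `2`'s at the (distinct) summing vertices and all-ones couplings. -/
noncomputable def cliquePathMatrix {V : Type*} [DecidableEq V] (s : ℕ) (K : Fin s → Finset V) :
    Matrix V V ℝ :=
  fun u v => ((Finset.univ.filter (fun i : Fin s => u ∈ K i ∧ v ∈ K i)).card : ℝ)

/-- Any real matrix has at most `rank + 1` distinct real eigenvalues. -/
lemma card_spectrum_le_rank_add_one {n : Type*} [Fintype n] [DecidableEq n]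
    (A : Matrix n n ℝ) : (spectrum ℝ A).ncard ≤ A.rank + 1 := by
  set S := spectrum ℝ A with hS
  have key : ∀ t : Finset ℝ, ↑t ⊆ S \ {0} → t.card ≤ A.rank := by
    intro t ht
    have hspec : spectrum ℝ (Matrix.toLinAlgEquiv' A) = S :=
      AlgEquiv.spectrum_eq _ _
    have hev : ∀ μ : (↑t : Set ℝ), Module.End.HasEigenvalue (Matrix.toLinAlgEquiv' A) μ := by
      intro μ
      apply Module.End.hasEigenvalue_iff_mem_spectrum.mpr
      rw [hspec]
      exact (ht μ.2).1
    choose xs hxs using fun μ => (hev μ).exists_hasEigenvector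
    have hli := Module.End.eigenvectors_linearIndependent (Matrix.toLinAlgEquiv' A) ↑t xs hxs
    set p := LinearMap.range A.mulVecLin with hp
    have hmem : ∀ μ : (↑t : Set ℝ), xs μ ∈ p := by
      intro μ
      have hμ0 : (μ : ℝ) ≠ 0 := by
        have := (ht μ.2).2; simpa using this
      have happ : A.mulVec (xs μ) = (μ : ℝ) • xs μ := (hxs μ).apply_eq_smul
      refine ⟨(μ : ℝ)⁻¹ • xs μ, ?_⟩
      rw [_root_.map_smul, mulVecLin_apply, happ, smul_smul, inv_mul_cancel₀ hμ0, one_smul]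
    let ys : (↑t : Set ℝ) → p := fun μ => ⟨xs μ, hmem μ⟩
    have hys : LinearIndependent ℝ ys := LinearIndependent.of_comp p.subtype hli
    have hcard := hys.fintype_card_le_finrank
    simpa [Matrix.rank] using hcard
  by_cases hfin : (S \ {0} : Set ℝ).Finite
  · have h1 : (S \ {0}).ncard ≤ A.rank := by
      have := key hfin.toFinset (by simp)
      rwa [Set.ncard_eq_toFinset_card _ hfin]
    have h2 : S.ncard ≤ (S \ {0}).ncard + ({0} : Set ℝ).ncard := by
      refine le_trans (Set.ncard_le_ncard ?_ ?_) (Set.ncard_union_le _ _)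
      · intro x hx
        by_cases hx0 : x = 0
        · exact Or.inr (by simp [hx0])
        · exact Or.inl ⟨hx, hx0⟩
      · exact hfin.union (Set.finite_singleton 0)
    simpa using h2.trans (by simpa using Nat.add_le_add_right h1 1)
  · exfalso
    obtain ⟨t, hts, hcard⟩ :=
      Set.Infinite.exists_subset_card_eq hfin (A.rank + 1)
    have := key t hts
    omega

/-- rows of the incidence matrix are linearly independent -/
lemma rows_li {V : Type*} [DecidableEq V] (s : ℕ) (K : Fin s → Finset V)
    (hcard : ∀ i, 2 ≤ (K i).card)
    (hconsec : ∀ i j : Fin s, (i : ℕ) + 1 = (j : ℕ) → (K i ∩ K j).card = 1)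
    (hdisj : ∀ i j : Fin s, (i : ℕ) + 1 < (j : ℕ) → K i ∩ K j = ∅) :
    LinearIndependent ℝ (fun i : Fin s => fun x : V => if x ∈ K i then (1 : ℝ) else 0) := by
  rw [Fintype.linearIndependent_iff]
  intro g hg
  suffices H : ∀ n : ℕ, ∀ i : Fin s, (i : ℕ) = n → g i = 0 by
    intro i; exact H i i rfl
  intro n
  induction n using Nat.strong_induction_on with
  | _ n IH =>
    intro i hi
    have hxK : ∃ x, x ∈ K i ∧ ∀ j : Fin s, (i : ℕ) + 1 ≤ (j : ℕ) → x ∉ K j := by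
      by_cases hlast : (i : ℕ) + 1 < s
      · set i' : Fin s := ⟨(i : ℕ) + 1, hlast⟩ with hi'
        have h1 : (K i ∩ K i').card = 1 := hconsec i i' rfl
        have h2 : (K i \ K i').Nonempty := by
          rw [← Finset.card_pos]
          have h3 := Finset.card_inter_add_card_sdiff (K i) (K i')
          have h4 := hcard i
          omega
        obtain ⟨x, hx⟩ := h2
        rw [Finset.mem_sdiff] at hx
        refine ⟨x, hx.1, fun j hj hxj => ?_⟩
        rcases eq_or_lt_of_le hj with h | h
        · exact hx.2 (by rwa [show j = i' from Fin.ext h.symm] at hxj)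
        · have h5 := hdisj i j h
          have : x ∈ K i ∩ K j := Finset.mem_inter.mpr ⟨hx.1, hxj⟩
          simp [h5] at this
      · have h2 : (K i).Nonempty := Finset.card_pos.mp (by have := hcard i; omega)
        obtain ⟨x, hx⟩ := h2
        exact ⟨x, hx, fun j hj _ => absurd j.isLt (by omega)⟩
    obtain ⟨x, hxi, hxgt⟩ := hxK
    have hx0 := congrFun hg x
    simp only [Finset.sum_apply, Pi.smul_apply, smul_eq_mul, Pi.zero_apply] at hx0
    rw [Finset.sum_eq_single i] at hx0
    · simpa [hxi] using hx0
    · intro j _ hji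
      by_cases hxj : x ∈ K j
      · rcases lt_trichotomy (j : ℕ) (i : ℕ) with h | h | h
        · simp [IH j (by omega) j rfl]
        · exact absurd (Fin.ext h) hji
        · exact absurd hxj (hxgt j (by omega))
      · simp [hxj]
    · intro h; exact absurd (Finset.mem_univ i) h

lemma cliquePathMatrix_rank {V : Type*} [Fintype V] [DecidableEq V] (s : ℕ)
    (K : Fin s → Finset V)
    (hcard : ∀ i, 2 ≤ (K i).card)
    (hconsec : ∀ i j : Fin s, (i : ℕ) + 1 = (j : ℕ) → (K i ∩ K j).card = 1)
    (hdisj : ∀ i j : Fin s, (i : ℕ) + 1 < (j : ℕ) → K i ∩ K j = ∅) :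
    (cliquePathMatrix s K).rank = s := by
  set M : Matrix (Fin s) V ℝ :=
    Matrix.of (fun i x => if x ∈ K i then (1 : ℝ) else 0) with hM
  have hfact : cliquePathMatrix s K = Mᵀ * M := by
    ext u v
    rw [Matrix.mul_apply]
    have : ∀ i : Fin s, Mᵀ u i * M i v = if u ∈ K i ∧ v ∈ K i then (1 : ℝ) else 0 := by
      intro i
      simp only [Matrix.transpose_apply, hM, Matrix.of_apply]
      split_ifs with h1 h2 h3 h3 <;> simp_all
    rw [Finset.sum_congr rfl (fun i _ => this i), Finset.sum_boole]
    rfl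
  rw [hfact, Matrix.rank_transpose_mul_self]
  have hli := rows_li s K hcard hconsec hdisj
  rw [← Matrix.rank_transpose, Matrix.rank_eq_finrank_span_cols]
  change Module.finrank ℝ (Submodule.span ℝ (Set.range M)) = s
  have : Set.range (M : Matrix (Fin s) V ℝ) =
      Set.range (fun i : Fin s => fun x : V => if x ∈ K i then (1 : ℝ) else 0) := rfl
  rw [this, finrank_span_eq_card hli, Fintype.card_fin]

theorem stmt10 {V : Type*} [Fintype V] [DecidableEq V] (s : ℕ) (hs : 2 ≤ s)
    (K : Fin s → Finset V)
    (hcard : ∀ i, 2 ≤ (K i).card)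
    (hcover : ∀ x : V, ∃ i, x ∈ K i)
    (hconsec : ∀ i j : Fin s, (i : ℕ) + 1 = (j : ℕ) → (K i ∩ K j).card = 1)
    (hdisj : ∀ i j : Fin s, (i : ℕ) + 1 < (j : ℕ) → K i ∩ K j = ∅) :
    inS (cliqueUnionGraph s K) (cliquePathMatrix s K) ∧
      (cliquePathMatrix s K).rank = s ∧
      qGraph (cliqueUnionGraph s K) ≤ s + 1 := by
  have hinS : inS (cliqueUnionGraph s K) (cliquePathMatrix s K) := by
    constructor
    · ext u v
      simp only [Matrix.transpose_apply, cliquePathMatrix]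
      congr 1
      apply congrArg
      apply Finset.filter_congr
      intro i _
      exact and_comm
    · intro u v huv
      constructor
      · intro hne
        have hpos : (0 : ℕ) <
            (Finset.univ.filter (fun i : Fin s => u ∈ K i ∧ v ∈ K i)).card := by
          rcases Nat.eq_zero_or_pos
            (Finset.univ.filter (fun i : Fin s => u ∈ K i ∧ v ∈ K i)).card with h | h
          · exact absurd (by simp [cliquePathMatrix, h]) hne
          · exact h
        obtain ⟨i, hi⟩ := Finset.card_pos.mp hpos
        rw [Finset.mem_filter] at hi
        exact ⟨huv, i, hi.2.1, hi.2.2⟩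
      · rintro ⟨-, i, hu, hv⟩ h0
        have hc : (Finset.univ.filter (fun i : Fin s => u ∈ K i ∧ v ∈ K i)).card = 0 := by
          have : ((Finset.univ.filter (fun i : Fin s => u ∈ K i ∧ v ∈ K i)).card : ℝ) = 0 := h0
          exact_mod_cast this
        rw [Finset.card_eq_zero] at hc
        have : i ∈ (∅ : Finset (Fin s)) :=
          hc ▸ Finset.mem_filter.mpr ⟨Finset.mem_univ i, hu, hv⟩
        simp at this
  have hrank : (cliquePathMatrix s K).rank = s :=
    cliquePathMatrix_rank s K hcard hconsec hdisj
  refine ⟨hinS, hrank, ?_⟩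
  have h1 : qGraph (cliqueUnionGraph s K) ≤ (spectrum ℝ (cliquePathMatrix s K)).ncard :=
    Nat.sInf_le ⟨cliquePathMatrix s K, hinS, rfl⟩
  have h2 := card_spectrum_le_rank_add_one (cliquePathMatrix s K)
  rw [hrank] at h2
  exact h1.trans h2
end

section
/- Let s≥2 and n₁,…,n_s≥2, let ℓ_i=n_i−1, n=1+Σℓ_i, and let A be the n×n symmetric matrix with diagonal blocks (1/ℓ_i)J_{ℓ_i} for i=1,…,s, last row/column entries (1/ℓ_i) on the positions of block i, and last diagonal entry Σ_{i=1}^s 1/ℓ_i. Then A ∈ S(KS(n₁,…,n_s)), rank(A)=s, A has eigenvalue 1 with multiplicity at least s−1, and A has exactly 3 distinct eigenvalues. Consequently q(KS(n₁,…,n_s))=3, using that q≥3 from the unique shortest path of length two through the center. -/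
open Matrix

/-- The matrix with diagonal blocks `(1/ℓᵢ) J_{ℓᵢ}`, entries `1/ℓᵢ` between the center and the
noncentral vertices of the `i`-th clique, and `Σᵢ 1/ℓᵢ` at the center (where `ℓᵢ = n_i - 1`):
its `(u,v)` entry is `Σ_{i : u,v ∈ K i} 1/((K i).card - 1)`. -/
noncomputable def cliqueStarMatrix {V : Type*} [DecidableEq V] (s : ℕ) (K : Fin s → Finset V) :
    Matrix V V ℝ :=
  fun u v => ∑ i : Fin s, if u ∈ K i ∧ v ∈ K i then (((K i).card : ℝ) - 1)⁻¹ else 0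

namespace CSAux

open Finset Polynomial

variable {V : Type*} [Fintype V] [DecidableEq V] {s : ℕ} (K : Fin s → Finset V)

noncomputable def cf (i : Fin s) : ℝ := (((K i).card : ℝ) - 1)⁻¹

def chi (i : Fin s) : V → ℝ := fun u => if u ∈ K i then 1 else 0

noncomputable def wv : V → ℝ := fun u => ∑ i, cf K i * chi K i u

noncomputable def mu : ℝ := 1 + ∑ i, cf K i

variable {K}

section basic

variable (hcard : ∀ i, 2 ≤ (K i).card)

include hcard in
lemma cardR_pos (i : Fin s) : (0:ℝ) < ((K i).card : ℝ) - 1 := by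
  have : (2:ℝ) ≤ ((K i).card : ℝ) := by exact_mod_cast hcard i
  linarith

include hcard in
lemma cf_pos (i : Fin s) : 0 < cf K i := inv_pos.2 (cardR_pos hcard i)

include hcard in
lemma cf_mul (i : Fin s) : cf K i * (((K i).card : ℝ) - 1) = 1 :=
  inv_mul_cancel₀ (ne_of_gt (cardR_pos hcard i))

include hcard in
lemma cf_mul_card (i : Fin s) : cf K i * ((K i).card : ℝ) = 1 + cf K i := by
  have h := cf_mul hcard i
  have h2 : cf K i * (((K i).card:ℝ) - 1) = cf K i * ((K i).card:ℝ) - cf K i := by ring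
  rw [h2] at h
  linarith

end basic

lemma entry (u v : V) :
    cliqueStarMatrix s K u v = ∑ i, cf K i * (chi K i u * chi K i v) := by
  unfold cliqueStarMatrix
  refine Finset.sum_congr rfl fun i _ => ?_
  by_cases hu : u ∈ K i <;> by_cases hv : v ∈ K i <;> simp [chi, cf, hu, hv]

lemma chi_dot (i j : Fin s) :
    (∑ u, chi K i u * chi K j u) = ((K i ∩ K j).card : ℝ) := by
  have : ∀ u, chi K i u * chi K j u = if u ∈ K i ∩ K j then (1:ℝ) else 0 := by
    intro u
    by_cases hu : u ∈ K i <;> by_cases hv : u ∈ K j <;>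
      simp [chi, hu, hv, Finset.mem_inter]
  simp only [this]
  rw [Finset.sum_ite_mem, Finset.univ_inter, Finset.sum_const, nsmul_eq_mul, mul_one]

section withhyp

variable (hcard : ∀ i, 2 ≤ (K i).card) {c : V} (hc : ∀ i, c ∈ K i)
  (hinter : ∀ i j : Fin s, i ≠ j → K i ∩ K j = {c})

include hc hinter in
lemma sum_chi_chi (i j : Fin s) :
    (∑ u, chi K i u * chi K j u) = if i = j then ((K i).card : ℝ) else 1 := by
  rw [chi_dot]
  split_ifs with h
  · subst h; rw [Finset.inter_self]
  · rw [hinter i j h, Finset.card_singleton, Nat.cast_one]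

lemma mulVec_eq (x : V → ℝ) (u : V) :
    (cliqueStarMatrix s K *ᵥ x) u
      = ∑ i, cf K i * chi K i u * (∑ v, chi K i v * x v) := by
  simp only [mulVec, dotProduct, entry, Finset.sum_mul]
  rw [Finset.sum_comm]
  refine Finset.sum_congr rfl fun i _ => ?_
  rw [Finset.mul_sum]
  exact Finset.sum_congr rfl fun v _ => by ring

include hcard hc hinter in
lemma mulVec_chi (j : Fin s) :
    cliqueStarMatrix s K *ᵥ chi K j = chi K j + wv K := by
  funext u
  rw [mulVec_eq]
  have h1 : ∀ i, cf K i * chi K i u * (∑ v, chi K i v * chi K j v)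
      = cf K i * chi K i u + (if i = j then chi K j u else 0) := by
    intro i
    rw [sum_chi_chi hc hinter]
    split_ifs with h
    · subst h
      have hcc := cf_mul_card hcard i
      calc cf K i * chi K i u * ((K i).card:ℝ)
          = (cf K i * ((K i).card:ℝ)) * chi K i u := by ring
        _ = (1 + cf K i) * chi K i u := by rw [hcc]
        _ = cf K i * chi K i u + chi K i u := by ring
    · ring
  simp only [h1, Finset.sum_add_distrib, Finset.sum_ite_eq', Finset.mem_univ, if_true]
  simp [wv, add_comm]

include hcard hc hinter in
lemma sum_chi_wv (i : Fin s) :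
    (∑ v, chi K i v * wv K v) = 1 + ∑ j, cf K j := by
  simp only [wv, Finset.mul_sum]
  rw [Finset.sum_comm]
  have h1 : ∀ j, (∑ v, chi K i v * (cf K j * chi K j v))
      = cf K j + (if j = i then 1 else 0) := by
    intro j
    have : (∑ v, chi K i v * (cf K j * chi K j v)) = cf K j * ∑ v, chi K i v * chi K j v := by
      rw [Finset.mul_sum]; exact Finset.sum_congr rfl fun v _ => by ring
    rw [this, sum_chi_chi hc hinter]
    by_cases h : i = j
    · subst h; rw [if_pos rfl, if_pos rfl, cf_mul_card hcard i]; ring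
    · simp [h, Ne.symm h]
  simp only [h1, Finset.sum_add_distrib, Finset.sum_ite_eq', Finset.mem_univ, if_true]
  ring

include hcard hc hinter in
lemma mulVec_wv :
    cliqueStarMatrix s K *ᵥ wv K = mu K • wv K := by
  funext u
  rw [mulVec_eq]
  simp only [sum_chi_wv hcard hc hinter]
  have : ∀ i, cf K i * chi K i u * (1 + ∑ j, cf K j)
      = (1 + ∑ j, cf K j) * (cf K i * chi K i u) := fun i => by ring
  simp only [this, ← Finset.mul_sum]
  simp [mu, wv, mul_comm]

include hc in
lemma mulVec_single :
    cliqueStarMatrix s K *ᵥ Pi.single c 1 = wv K := by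
  funext u
  rw [mulVec_eq]
  have h1 : ∀ i, (∑ v, chi K i v * (Pi.single c 1 : V → ℝ) v) = 1 := by
    intro i
    have : ∀ v, chi K i v * (Pi.single c 1 : V → ℝ) v = if v = c then chi K i v else 0 := by
      intro v
      rcases eq_or_ne v c with rfl | h
      · simp
      · simp [h, Pi.single_apply]
    simp only [this, Finset.sum_ite_eq', Finset.mem_univ, if_true]
    simp [chi, hc i]
  simp only [h1, mul_one]
  simp [wv, mul_comm]

lemma S_eq (x : V → ℝ) :
    (∑ j, cf K j * (∑ v, chi K j v * x v)) = ∑ v, wv K v * x v := by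
  simp only [Finset.mul_sum]
  rw [Finset.sum_comm]
  refine Finset.sum_congr rfl fun v _ => ?_
  simp only [wv, Finset.sum_mul]
  exact Finset.sum_congr rfl fun j _ => by ring

include hcard hc hinter in
lemma sum_chi_mulVec (x : V → ℝ) (i : Fin s) :
    (∑ v, chi K i v * (cliqueStarMatrix s K *ᵥ x) v)
      = (∑ v, chi K i v * x v) + ∑ v, wv K v * x v := by
  simp only [mulVec_eq]
  have h1 : ∀ v, chi K i v * (∑ j, cf K j * chi K j v * (∑ w, chi K j w * x w))
      = ∑ j, (cf K j * (∑ w, chi K j w * x w)) * (chi K i v * chi K j v) := by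
    intro v
    rw [Finset.mul_sum]
    exact Finset.sum_congr rfl fun j _ => by ring
  simp only [h1]
  rw [Finset.sum_comm]
  have h2 : ∀ j, (∑ v, (cf K j * (∑ w, chi K j w * x w)) * (chi K i v * chi K j v))
      = (cf K j * (∑ w, chi K j w * x w)) * (if i = j then ((K i).card : ℝ) else 1) := by
    intro j
    rw [← Finset.mul_sum, sum_chi_chi hc hinter]
  simp only [h2]
  have h3 : ∀ j, (cf K j * (∑ w, chi K j w * x w)) * (if i = j then ((K i).card : ℝ) else 1)
      = cf K j * (∑ w, chi K j w * x w) + (if j = i then (∑ w, chi K j w * x w) else 0) := by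
    intro j
    by_cases h : i = j
    · subst h
      have hcc := cf_mul_card hcard i
      simp only [if_pos rfl]
      calc cf K i * (∑ w, chi K i w * x w) * ((K i).card:ℝ)
          = (cf K i * ((K i).card:ℝ)) * (∑ w, chi K i w * x w) := by ring
        _ = (1 + cf K i) * (∑ w, chi K i w * x w) := by rw [hcc]
        _ = cf K i * (∑ w, chi K i w * x w) + (∑ w, chi K i w * x w) := by ring
    · rw [if_neg h, if_neg (fun h' => h h'.symm)]; ring
  simp only [h3, Finset.sum_add_distrib, Finset.sum_ite_eq', Finset.mem_univ, if_true]
  rw [S_eq, add_comm]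

include hcard hc hinter in
lemma mulVec_mulVec_eq (x : V → ℝ) :
    cliqueStarMatrix s K *ᵥ (cliqueStarMatrix s K *ᵥ x)
      = cliqueStarMatrix s K *ᵥ x + (∑ v, wv K v * x v) • wv K := by
  funext u
  rw [mulVec_eq]
  simp only [sum_chi_mulVec hcard hc hinter]
  have h1 : ∀ i, cf K i * chi K i u * ((∑ v, chi K i v * x v) + ∑ v, wv K v * x v)
      = cf K i * chi K i u * (∑ v, chi K i v * x v)
        + (∑ v, wv K v * x v) * (cf K i * chi K i u) := fun i => by ring
  simp only [h1, Finset.sum_add_distrib, ← Finset.mul_sum]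
  rw [← mulVec_eq]
  simp [wv, smul_eq_mul, mul_comm]

end withhyp

-- continuing inside namespace CSAux, same variables
section part2

variable {V : Type*} [Fintype V] [DecidableEq V] {s : ℕ} {K : Fin s → Finset V}
variable (hcard : ∀ i, 2 ≤ (K i).card) {c : V} (hc : ∀ i, c ∈ K i)
  (hinter : ∀ i j : Fin s, i ≠ j → K i ∩ K j = {c})

open Finset Polynomial

lemma symmAux (u v : V) : cliqueStarMatrix s K u v = cliqueStarMatrix s K v u := by
  unfold cliqueStarMatrix
  exact Finset.sum_congr rfl fun i _ => if_congr and_comm rfl rfl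

include hinter in
lemma mem_unique {u : V} {i j : Fin s} (hu : u ∈ K i) (hu' : u ∈ K j) (hne : u ≠ c) :
    i = j := by
  by_contra h
  have : u ∈ K i ∩ K j := Finset.mem_inter.2 ⟨hu, hu'⟩
  rw [hinter i j h, Finset.mem_singleton] at this
  exact hne this

include hcard in
lemma exists_noncenter (i : Fin s) : ∃ u ∈ K i, u ≠ c :=
  Finset.exists_mem_ne (lt_of_lt_of_le one_lt_two (hcard i)) c

include hcard hinter in
lemma chi_li : LinearIndependent ℝ (chi K) := by
  have hpt := fun i => exists_noncenter hcard (c := c) i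
  choose u hu hune using hpt
  rw [Fintype.linearIndependent_iff]
  intro g hg i
  have h0 := congrFun hg (u i)
  rw [Finset.sum_apply] at h0
  have hterm : ∀ j, g j • chi K j (u i) = if j = i then g j else 0 := by
    intro j
    rcases eq_or_ne j i with rfl | h
    · simp [chi, hu j]
    · have : u i ∉ K j := fun hmem => h (mem_unique hinter hmem (hu i) (hune i))
      simp [chi, this, h]
  simp only [Pi.smul_apply] at h0
  rw [Finset.sum_congr rfl (fun j _ => hterm j)] at h0
  simpa using h0

include hcard hc hinter in
lemma mulVec_chi_sub_single (i : Fin s) :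
    cliqueStarMatrix s K *ᵥ (chi K i - Pi.single c 1) = chi K i := by
  rw [Matrix.mulVec_sub, mulVec_chi hcard hc hinter, mulVec_single hc]
  simp

include hcard hc hinter in
lemma range_eq :
    LinearMap.range (cliqueStarMatrix s K).mulVecLin
      = Submodule.span ℝ (Set.range (chi K)) := by
  apply le_antisymm
  · rintro y ⟨x, rfl⟩
    have : (cliqueStarMatrix s K).mulVecLin x
        = ∑ i, (cf K i * ∑ v, chi K i v * x v) • chi K i := by
      funext u
      rw [Matrix.mulVecLin_apply, mulVec_eq]
      rw [Finset.sum_apply]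
      exact Finset.sum_congr rfl fun i _ => by simp [smul_eq_mul]; ring
    rw [this]
    exact Submodule.sum_mem _ fun i _ =>
      Submodule.smul_mem _ _ (Submodule.subset_span ⟨i, rfl⟩)
  · rw [Submodule.span_le]
    rintro y ⟨i, rfl⟩
    exact ⟨chi K i - Pi.single c 1, mulVec_chi_sub_single hcard hc hinter i⟩

include hcard hc hinter in
lemma rank_eq_s : (cliqueStarMatrix s K).rank = s := by
  rw [Matrix.rank, range_eq hcard hc hinter,
    finrank_span_eq_card (chi_li hcard hinter), Fintype.card_fin]

end part2

section part3

variable {V : Type*} [Fintype V] [DecidableEq V] {s : ℕ} {K : Fin s → Finset V}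
variable (hcard : ∀ i, 2 ≤ (K i).card) {c : V} (hc : ∀ i, c ∈ K i)
  (hinter : ∀ i j : Fin s, i ≠ j → K i ∩ K j = {c})

open Finset Polynomial

lemma mem_spectrum_iff' [Nonempty V] (M : Matrix V V ℝ) (r : ℝ) :
    r ∈ spectrum ℝ M ↔ ∃ x, x ≠ 0 ∧ M *ᵥ x = r • x := by
  have key : ∀ x : V → ℝ, (algebraMap ℝ (Matrix V V ℝ) r - M) *ᵥ x = r • x - M *ᵥ x := by
    intro x
    rw [Matrix.sub_mulVec, Algebra.algebraMap_eq_smul_one, Matrix.smul_mulVec,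
      Matrix.one_mulVec]
  rw [spectrum.mem_iff, Matrix.isUnit_iff_isUnit_det, isUnit_iff_ne_zero, not_not,
    ← Matrix.exists_mulVec_eq_zero_iff]
  constructor
  · rintro ⟨x, hx, h⟩
    rw [key, sub_eq_zero] at h
    exact ⟨x, hx, h.symm⟩
  · rintro ⟨x, hx, h⟩
    exact ⟨x, hx, by rw [key, h, sub_self]⟩

include hc in
lemma wv_c : wv K c = ∑ i, cf K i := by
  unfold wv
  exact Finset.sum_congr rfl fun i _ => by simp [chi, hc i]

include hcard in
lemma sum_cf_pos (hs : 2 ≤ s) : 0 < ∑ i, cf K i := by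
  have : Nonempty (Fin s) := ⟨⟨0, by omega⟩⟩
  exact Finset.sum_pos (fun i _ => cf_pos hcard i) Finset.univ_nonempty

include hcard in
lemma one_lt_mu (hs : 2 ≤ s) : 1 < mu K := by
  have := sum_cf_pos hcard hs (K := K)
  unfold mu; linarith

include hcard hc hinter in
lemma mulVec_kernel_vec :
    cliqueStarMatrix s K *ᵥ (mu K • (Pi.single c 1 : V → ℝ) - wv K) = 0 := by
  rw [Matrix.mulVec_sub, Matrix.mulVec_smul, mulVec_single hc, mulVec_wv hcard hc hinter]
  simp

include hcard hc in
lemma kernel_vec_ne (hs : 2 ≤ s) : (mu K • (Pi.single c 1 : V → ℝ) - wv K : V → ℝ) ≠ 0 := by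
  intro h
  have h2 := congrFun h c
  rw [Pi.sub_apply, Pi.smul_apply, Pi.single_eq_same, smul_eq_mul, mul_one, wv_c hc,
    Pi.zero_apply, mu, sub_eq_zero] at h2
  linarith

include hcard hc hinter in
lemma spectrum_eq (hs : 2 ≤ s) :
    spectrum ℝ (cliqueStarMatrix s K) = {0, 1, mu K} := by
  have : Nonempty V := ⟨c⟩
  have hwvne : (wv K : V → ℝ) ≠ 0 := by
    intro h
    have h2 := congrFun h c
    rw [wv_c hc, Pi.zero_apply] at h2
    exact absurd h2 (ne_of_gt (sum_cf_pos hcard hs))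
  ext r
  rw [mem_spectrum_iff']
  constructor
  · rintro ⟨x, hx, hAx⟩
    by_cases h0 : r = 0
    · exact Or.inl h0
    by_cases h1 : r = 1
    · exact Or.inr (Or.inl h1)
    refine Or.inr (Or.inr ?_)
    have hq := mulVec_mulVec_eq hcard hc hinter x
    rw [hAx, Matrix.mulVec_smul, hAx, smul_smul] at hq
    set S := ∑ v, wv K v * x v with hS
    have hx' : (r * r - r) • x = S • wv K := by
      have : (r * r) • x = r • x + S • wv K := hq
      rw [sub_smul]
      rw [this]; abel
    have hrr : r * r - r ≠ 0 := by
      intro h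
      rcases mul_eq_zero.1 (by linarith [h] : r * (r - 1) = 0) with h' | h'
      · exact h0 h'
      · exact h1 (by linarith)
    set t : ℝ := (r * r - r)⁻¹ * S with ht
    have hxt : x = t • wv K := by
      have := congrArg (fun y => (r * r - r)⁻¹ • y) hx'
      simpa [smul_smul, inv_mul_cancel₀ hrr, ht] using this
    have htne : t ≠ 0 := by
      intro h; apply hx; rw [hxt, h, zero_smul]
    have hAwv := mulVec_wv hcard hc hinter (K := K)
    have : (r * t) • wv K = (t * mu K) • wv K := by
      calc (r * t) • wv K = r • x := by rw [hxt, smul_smul]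
        _ = cliqueStarMatrix s K *ᵥ x := hAx.symm
        _ = t • (cliqueStarMatrix s K *ᵥ wv K) := by rw [hxt, Matrix.mulVec_smul]
        _ = (t * mu K) • wv K := by rw [hAwv, smul_smul]
    have hc2 := congrFun this c
    rw [Pi.smul_apply, Pi.smul_apply, smul_eq_mul, smul_eq_mul, wv_c hc] at hc2
    have hTne : (∑ i, cf K i) ≠ 0 := ne_of_gt (sum_cf_pos hcard hs)
    have heq : r * t = t * mu K := by
      rcases mul_eq_zero.1 (show (r * t - t * mu K) * (∑ i, cf K i) = 0 by
          linear_combination hc2) with h | h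
      · linarith
      · exact absurd h hTne
    rcases mul_eq_zero.1 (show t * (r - mu K) = 0 by linear_combination heq) with h' | h'
    · exact absurd h' htne
    · exact show r = mu K by linarith
  · intro hr
    rcases hr with rfl | rfl | rfl
    · exact ⟨_, kernel_vec_ne hcard hc hs, by
        rw [mulVec_kernel_vec hcard hc hinter, zero_smul]⟩
    · obtain ⟨i0, i1, hne⟩ : ∃ i0 i1 : Fin s, i0 ≠ i1 :=
        ⟨⟨0, by omega⟩, ⟨1, by omega⟩, by simp [Fin.ext_iff]⟩
      obtain ⟨u, hu, hune⟩ := exists_noncenter hcard (c := c) i0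
      refine ⟨chi K i0 - chi K i1, ?_, ?_⟩
      · intro h
        have h2 := congrFun h u
        have hnot : u ∉ K i1 := fun hmem => hne (mem_unique hinter hu hmem hune)
        simp [chi, hu, hnot] at h2
      · rw [Matrix.mulVec_sub, mulVec_chi hcard hc hinter, mulVec_chi hcard hc hinter,
          one_smul]
        abel
    · exact ⟨wv K, hwvne, mulVec_wv hcard hc hinter⟩

include hcard hc hinter in
lemma spectrum_ncard (hs : 2 ≤ s) :
    (spectrum ℝ (cliqueStarMatrix s K)).ncard = 3 := by
  rw [spectrum_eq hcard hc hinter hs]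
  have hmu := one_lt_mu hcard (K := K) hs
  rw [Set.ncard_insert_of_notMem (by
      simp only [Set.mem_insert_iff, Set.mem_singleton_iff]
      push_neg
      constructor <;> intro h <;> linarith)]
  rw [Set.ncard_pair (by intro h; linarith)]

end part3

section part4

variable {V : Type*} [Fintype V] [DecidableEq V] {s : ℕ} {K : Fin s → Finset V}
variable (hcard : ∀ i, 2 ≤ (K i).card) {c : V} (hc : ∀ i, c ∈ K i)
  (hinter : ∀ i j : Fin s, i ≠ j → K i ∩ K j = {c})

open Finset Polynomial

lemma isHerm : (cliqueStarMatrix s K).IsHermitian := by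
  ext u v
  rw [Matrix.conjTranspose_apply, star_trivial]
  exact symmAux v u

lemma charpoly_conj {n : Type*} [Fintype n] [DecidableEq n] (N M P : Matrix n n ℝ)
    (h1 : N * P = 1) : (N * M * P).charpoly = M.charpoly := by
  unfold Matrix.charpoly
  set N' := (C : ℝ →+* ℝ[X]).mapMatrix N with hN'
  set P' := (C : ℝ →+* ℝ[X]).mapMatrix P with hP'
  have hNP : N' * P' = 1 := by rw [hN', hP', ← _root_.map_mul, h1, _root_.map_one]
  have hsc : N' * Matrix.scalar n (X : ℝ[X]) * P' = Matrix.scalar n (X : ℝ[X]) := by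
    rw [← Matrix.scalar_commute (X : ℝ[X]) (fun r => Commute.all _ r) N', mul_assoc, hNP,
      mul_one]
  have hch : charmatrix (N * M * P) = N' * charmatrix M * P' := by
    unfold charmatrix
    rw [_root_.map_mul, _root_.map_mul, mul_sub, sub_mul, hsc]
  have hdet : N'.det * P'.det = 1 := by rw [← Matrix.det_mul, hNP, Matrix.det_one]
  rw [hch, Matrix.det_mul, Matrix.det_mul]
  calc N'.det * M.charmatrix.det * P'.det = N'.det * P'.det * M.charmatrix.det := by ring
    _ = M.charmatrix.det := by rw [hdet, one_mul]

lemma charpoly_diagonal' {n : Type*} [Fintype n] [DecidableEq n] (d : n → ℝ) :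
    (Matrix.diagonal d).charpoly = ∏ i, (X - C (d i)) := by
  unfold Matrix.charpoly
  have h : charmatrix (Matrix.diagonal d) = Matrix.diagonal (fun i => (X : ℝ[X]) - C (d i)) := by
    ext i j
    rcases eq_or_ne i j with rfl | h
    · simp
    · rw [charmatrix_apply_ne _ _ _ h, Matrix.diagonal_apply_ne _ h, Matrix.diagonal_apply_ne _ h]
      simp
  rw [h, Matrix.det_diagonal]

lemma charpoly_eq_prod (hH : (cliqueStarMatrix s K).IsHermitian) :
    (cliqueStarMatrix s K).charpoly = ∏ i, (X - C (hH.eigenvalues i)) := by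
  have hU1 : (hH.eigenvectorUnitary : Matrix V V ℝ) * star (hH.eigenvectorUnitary : Matrix V V ℝ)
      = 1 := Matrix.mem_unitaryGroup_iff.mp hH.eigenvectorUnitary.2
  conv_lhs => rw [hH.spectral_theorem, Unitary.conjStarAlgAut_apply]
  rw [charpoly_conj _ _ _ hU1]
  have h2 : (RCLike.ofReal ∘ hH.eigenvalues : V → ℝ) = hH.eigenvalues := by
    funext i; simp
  rw [h2, charpoly_diagonal']

include hcard hc hinter in
lemma trace_eq : (cliqueStarMatrix s K).trace = (s : ℝ) - 1 + mu K := by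
  rw [Matrix.trace]
  have h1 : ∀ u : V, (cliqueStarMatrix s K).diag u = ∑ i, cf K i * (chi K i u * chi K i u) :=
    fun u => entry u u
  simp only [h1]
  rw [Finset.sum_comm]
  have h2 : ∀ i, (∑ u, cf K i * (chi K i u * chi K i u)) = 1 + cf K i := by
    intro i
    rw [← Finset.mul_sum, sum_chi_chi hc hinter i i, if_pos rfl, cf_mul_card hcard]
  simp only [h2]
  rw [Finset.sum_add_distrib, Finset.sum_const, Finset.card_univ, Fintype.card_fin]
  rw [mu]
  push_cast
  ring

lemma trace_eq_sum_eig (hH : (cliqueStarMatrix s K).IsHermitian) :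
    (cliqueStarMatrix s K).trace = ∑ i, hH.eigenvalues i := by
  conv_lhs => rw [hH.spectral_theorem, Unitary.conjStarAlgAut_apply]
  rw [Matrix.trace_mul_cycle, Matrix.mem_unitaryGroup_iff'.mp hH.eigenvectorUnitary.2, one_mul,
    Matrix.trace_diagonal]
  simp

include hcard hc hinter in
lemma rootMult (hs : 2 ≤ s) :
    Polynomial.rootMultiplicity 1 (cliqueStarMatrix s K).charpoly = s - 1 := by
  have hH : (cliqueStarMatrix s K).IsHermitian := isHerm
  set e := hH.eigenvalues with he
  have hroots : (cliqueStarMatrix s K).charpoly.roots = Finset.univ.val.map e := by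
    rw [charpoly_eq_prod hH, show (∏ i, ((X : ℝ[X]) - C (e i)))
        = ((Finset.univ.val.map e).map (fun a => X - C a)).prod from by
      rw [Multiset.map_map]; rfl]
    exact roots_multiset_prod_X_sub_C _
  set T1 := Finset.univ.filter (fun i => e i = 1) with hT1
  set Tm := Finset.univ.filter (fun i => e i = mu K) with hTm
  have hmu := one_lt_mu hcard (K := K) hs
  have hcount : rootMultiplicity 1 (cliqueStarMatrix s K).charpoly = T1.card := by
    rw [← Polynomial.count_roots, hroots, Multiset.count_map]
    rw [hT1]
    congr 1
    exact Multiset.filter_congr (fun x _ => by constructor <;> exact Eq.symm)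
  have he_spec : ∀ i, e i = 0 ∨ e i = 1 ∨ e i = mu K := by
    intro i
    have h := hH.eigenvalues_mem_spectrum_real i
    rw [spectrum_eq hcard hc hinter hs] at h
    simpa using h
  have hfilters : Finset.univ.filter (fun i => e i ≠ 0) = T1 ∪ Tm := by
    ext i
    simp only [hT1, hTm, Finset.mem_union, Finset.mem_filter, Finset.mem_univ, true_and]
    constructor
    · intro h
      rcases he_spec i with h0 | h1 | hm
      · exact absurd h0 h
      · exact Or.inl h1
      · exact Or.inr hm
    · rintro (h | h) <;> rw [h]
      · exact one_ne_zero
      · intro h'; rw [h'] at hmu; linarith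
  have hdisj : Disjoint T1 Tm := by
    rw [Finset.disjoint_left]
    intro i h1 h2
    rw [hT1, Finset.mem_filter] at h1
    rw [hTm, Finset.mem_filter] at h2
    rw [h1.2] at h2
    linarith [h2.2]
  have hbm : T1.card + Tm.card = s := by
    have h := hH.rank_eq_card_non_zero_eigs
    rw [rank_eq_s hcard hc hinter] at h
    rw [← Finset.card_union_of_disjoint hdisj, ← hfilters]
    rw [h, Fintype.card_subtype]
  have hsum : (T1.card : ℝ) + (Tm.card : ℝ) * mu K = (s : ℝ) - 1 + mu K := by
    have h := (trace_eq_sum_eig hH).symm.trans (trace_eq hcard hc hinter)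
    rw [← Finset.sum_filter_ne_zero Finset.univ (f := e), hfilters,
      Finset.sum_union hdisj] at h
    have hs1 : ∑ i ∈ T1, e i = (T1.card : ℝ) := by
      rw [Finset.sum_congr rfl (fun i hi => (Finset.mem_filter.1 hi).2), Finset.sum_const,
        nsmul_eq_mul, mul_one]
    have hs2 : ∑ i ∈ Tm, e i = (Tm.card : ℝ) * mu K := by
      rw [Finset.sum_congr rfl (fun i hi => (Finset.mem_filter.1 hi).2), Finset.sum_const,
        nsmul_eq_mul]
    rw [hs1, hs2] at h
    exact h
  have hbR : (T1.card : ℝ) + (Tm.card : ℝ) = (s : ℝ) := by exact_mod_cast hbm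
  have hm1 : (Tm.card : ℝ) = 1 := by
    rcases mul_eq_zero.1 (show ((Tm.card : ℝ) - 1) * (mu K - 1) = 0 by
        linear_combination hsum - hbR) with h | h
    · linarith
    · linarith
  have hmnat : Tm.card = 1 := by exact_mod_cast hm1
  rw [hcount]
  omega

include hcard in
lemma entry_pos' {u v : V} (h : ∃ i, u ∈ K i ∧ v ∈ K i) :
    0 < cliqueStarMatrix s K u v := by
  obtain ⟨i0, hi0⟩ := h
  unfold cliqueStarMatrix
  apply Finset.sum_pos'
  · intro i _
    split_ifs with hi
    · exact le_of_lt (inv_pos.2 (cardR_pos hcard i))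
    · exact le_refl 0
  · exact ⟨i0, Finset.mem_univ _, by rw [if_pos hi0]; exact inv_pos.2 (cardR_pos hcard i0)⟩

lemma entry_zero' {u v : V} (h : ¬∃ i, u ∈ K i ∧ v ∈ K i) :
    cliqueStarMatrix s K u v = 0 := by
  unfold cliqueStarMatrix
  exact Finset.sum_eq_zero fun i _ => if_neg (fun hi => h ⟨i, hi⟩)

end part4

end CSAux

theorem stmt11 {V : Type*} [Fintype V] [DecidableEq V] (s : ℕ) (hs : 2 ≤ s)
    (K : Fin s → Finset V) (c : V)
    (hcard : ∀ i, 2 ≤ (K i).card)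
    (hc : ∀ i, c ∈ K i)
    (hinter : ∀ i j : Fin s, i ≠ j → K i ∩ K j = {c})
    (hcover : ∀ x : V, ∃ i, x ∈ K i)
    (hq3 : 3 ≤ qGraph (cliqueUnionGraph s K)) :
    inS (cliqueUnionGraph s K) (cliqueStarMatrix s K) ∧
      (cliqueStarMatrix s K).rank = s ∧
      s - 1 ≤ Polynomial.rootMultiplicity 1 (cliqueStarMatrix s K).charpoly ∧
      (spectrum ℝ (cliqueStarMatrix s K)).ncard = 3 ∧
      qGraph (cliqueUnionGraph s K) = 3 := by
  have hinS : inS (cliqueUnionGraph s K) (cliqueStarMatrix s K) := by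
    constructor
    · ext u v
      rw [Matrix.transpose_apply]
      exact CSAux.symmAux v u
    · intro u v huv
      constructor
      · intro hne
        refine ⟨huv, ?_⟩
        by_contra h
        exact hne (CSAux.entry_zero' h)
      · rintro ⟨-, hex⟩
        exact ne_of_gt (CSAux.entry_pos' hcard hex)
  have hrank := CSAux.rank_eq_s hcard hc hinter
  have hncard := CSAux.spectrum_ncard hcard hc hinter hs
  have hrm := CSAux.rootMult hcard hc hinter hs
  refine ⟨hinS, hrank, le_of_eq hrm.symm, hncard, ?_⟩
  exact le_antisymm (Nat.sInf_le ⟨cliqueStarMatrix s K, hinS, hncard⟩) hq3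
end

section
/- Let G and G' be connected graphs with |V(G)|=n and |V(G')|=n−ℓ for some 1≤ℓ<n. Assuming that for connected graphs of equal order n the join admits a matrix with two eigenvalues each of multiplicity n, we have q(G∨G') ≤ 2+ℓ. -/
open Matrix Polynomial

/-- The join `G ∨ G'` of two graphs on disjoint vertex sets. -/
def joinGraph {V W : Type*} (G : SimpleGraph V) (G' : SimpleGraph W) :
    SimpleGraph (V ⊕ W) where
  Adj x y :=
    match x, y with
    | .inl a, .inl b => G.Adj a b
    | .inr a, .inr b => G'.Adj a b
    | .inl _, .inr _ => True
    | .inr _, .inl _ => True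
  symm := ⟨by rintro (a | a) (b | b) h <;> simp_all [SimpleGraph.adj_comm]⟩
  loopless := ⟨by rintro (a | a) h <;> simp_all⟩

/-! ### Auxiliary lemmas -/

section Aux

lemma aux_sum_finrank_le {K V ι : Type*} [Field K] [AddCommGroup V] [Module K V]
    [FiniteDimensional K V] {p : ι → Submodule K V} (hp : iSupIndep p) (s : Finset ι) :
    ∑ i ∈ s, Module.finrank K (p i) ≤ Module.finrank K V := by
  classical
  have key : ∀ s : Finset ι, ∑ i ∈ s, Module.finrank K (p i)
      ≤ Module.finrank K (⨆ i ∈ s, p i : Submodule K V) := by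
    intro s
    induction s using Finset.induction_on with
    | empty => simp
    | @insert a s ha ih =>
      have hdisj : Disjoint (p a) (⨆ i ∈ s, p i) := by
        refine (hp a).mono_right ?_
        refine iSup₂_le fun i hi => ?_
        have hia : i ≠ a := fun h => ha (h ▸ hi)
        exact le_iSup₂_of_le i hia le_rfl
      have heq : Module.finrank K ((p a ⊔ ⨆ i ∈ s, p i : Submodule K V) : Submodule K V)
          = Module.finrank K (p a) + Module.finrank K (⨆ i ∈ s, p i : Submodule K V) := by
        have := Submodule.finrank_sup_add_finrank_inf_eq (p a) (⨆ i ∈ s, p i)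
        rw [hdisj.eq_bot] at this
        simpa using this
      rw [Finset.sum_insert ha, Finset.iSup_insert, heq]
      omega
  exact (key s).trans (Submodule.finrank_le _)

variable {N : Type*} [Fintype N] [DecidableEq N]

lemma aux_spectral_real {A : Matrix N N ℝ} (hA : A.IsHermitian) :
    A = (hA.eigenvectorUnitary : Matrix N N ℝ) * diagonal hA.eigenvalues
        * star (hA.eigenvectorUnitary : Matrix N N ℝ) := by
  have := hA.spectral_theorem
  simpa [RCLike.ofReal_real_eq_id] using this

lemma aux_conj_sub_smul {A : Matrix N N ℝ} (hA : A.IsHermitian) (μ : ℝ) :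
    A - μ • 1 = (hA.eigenvectorUnitary : Matrix N N ℝ)
      * diagonal (fun i => hA.eigenvalues i - μ)
      * star (hA.eigenvectorUnitary : Matrix N N ℝ) := by
  have hU : (hA.eigenvectorUnitary : Matrix N N ℝ)
      * star (hA.eigenvectorUnitary : Matrix N N ℝ) = 1 :=
    Matrix.mem_unitaryGroup_iff.mp hA.eigenvectorUnitary.2
  have hdiag : diagonal (fun i => hA.eigenvalues i - μ)
      = diagonal hA.eigenvalues - μ • 1 := by
    ext i j
    by_cases h : i = j <;> simp [h, Matrix.one_apply, diagonal]
  rw [hdiag, mul_sub, sub_mul, ← aux_spectral_real hA]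
  congr 1
  rw [Matrix.mul_smul, mul_one, Matrix.smul_mul, hU]

lemma aux_rank_sub_smul {A : Matrix N N ℝ} (hA : A.IsHermitian) (μ : ℝ) :
    (A - μ • 1).rank = Fintype.card {i // hA.eigenvalues i ≠ μ} := by
  have hU : (hA.eigenvectorUnitary : Matrix N N ℝ)
      * star (hA.eigenvectorUnitary : Matrix N N ℝ) = 1 :=
    Matrix.mem_unitaryGroup_iff.mp hA.eigenvectorUnitary.2
  have hdet : IsUnit ((hA.eigenvectorUnitary : Matrix N N ℝ)).det :=
    IsUnit.of_mul_eq_one _ (by rw [← det_mul, hU, det_one])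
  have hdet' : IsUnit ((star (hA.eigenvectorUnitary : Matrix N N ℝ))).det :=
    IsUnit.of_mul_eq_one _ (by
      rw [← det_mul, Matrix.mem_unitaryGroup_iff'.mp hA.eigenvectorUnitary.2, det_one])
  rw [aux_conj_sub_smul hA μ, rank_mul_eq_left_of_isUnit_det _ _ hdet',
    rank_mul_eq_right_of_isUnit_det _ _ hdet, rank_diagonal]
  apply Fintype.card_congr
  apply Equiv.subtypeEquivRight
  intro i
  exact sub_ne_zero

lemma aux_charpoly_eq {A : Matrix N N ℝ} (hA : A.IsHermitian) :
    A.charpoly = ((Finset.univ.val.map hA.eigenvalues).map fun r => X - C r).prod := by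
  apply Polynomial.funext
  intro x
  have hev : (Matrix.charpoly A).eval x = ((Matrix.scalar N x) - A).det := by
    rw [Matrix.charpoly, eval_det, matPolyEquiv_charmatrix]
    simp
  have hU : (hA.eigenvectorUnitary : Matrix N N ℝ)
      * star (hA.eigenvectorUnitary : Matrix N N ℝ) = 1 :=
    Matrix.mem_unitaryGroup_iff.mp hA.eigenvectorUnitary.2
  have hscalar : (Matrix.scalar N x) - A = (hA.eigenvectorUnitary : Matrix N N ℝ)
      * diagonal (fun i => x - hA.eigenvalues i)
      * star (hA.eigenvectorUnitary : Matrix N N ℝ) := by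
    have h1 : Matrix.scalar N x - A = -(A - x • 1) := by
      rw [neg_sub]
      congr 1
      ext i j
      by_cases h : i = j <;> simp [h, Matrix.one_apply, Matrix.scalar_apply, diagonal]
    rw [h1, aux_conj_sub_smul hA x, ← Matrix.neg_mul, ← Matrix.mul_neg, diagonal_neg]
    have h5 : (fun i => -hA.eigenvalues i + x) = (fun i => x - hA.eigenvalues i) := by
      funext i; ring
    rw [← h5]
    congr 1
    congr 1
    congr 1
    funext i
    ring
  rw [hev, hscalar, Matrix.det_mul_right_comm, hU, Matrix.one_mul, Matrix.det_diagonal,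
    Polynomial.eval_multiset_prod, Multiset.map_map, Multiset.map_map]
  simp only [Function.comp, eval_sub, eval_X, eval_C]
  rfl

lemma aux_ev_multiset {n : ℕ} {A : Matrix N N ℝ} (hA : A.IsHermitian) {a b : ℝ}
    (hcp : A.charpoly = (X - C a) ^ n * (X - C b) ^ n) :
    Finset.univ.val.map hA.eigenvalues = n • {a} + n • {b} := by
  have h := aux_charpoly_eq hA
  rw [hcp] at h
  have hne : ((X - C a) ^ n * (X - C b) ^ n : ℝ[X]) ≠ 0 :=
    (((monic_X_sub_C a).pow n).mul ((monic_X_sub_C b).pow n)).ne_zero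
  calc Finset.univ.val.map hA.eigenvalues
      = (((Finset.univ.val.map hA.eigenvalues).map fun r => X - C r).prod).roots :=
        (roots_multiset_prod_X_sub_C _).symm
    _ = (((X - C a) ^ n * (X - C b) ^ n : ℝ[X])).roots := by rw [← h]
    _ = n • {a} + n • {b} := by
        rw [roots_mul hne, roots_pow, roots_pow, roots_X_sub_C, roots_X_sub_C]

lemma aux_card_ne {n : ℕ} (hcard : Fintype.card N = n + n) (ev : N → ℝ) {a b : ℝ} (hab : a ≠ b)
    (h : Finset.univ.val.map ev = n • {a} + n • {b}) :
    Fintype.card {i // ev i ≠ a} = n := by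
  classical
  have hc : Multiset.count a (Finset.univ.val.map ev) = n := by
    rw [h, Multiset.count_add, Multiset.count_nsmul, Multiset.count_nsmul,
      Multiset.count_singleton, Multiset.count_singleton]
    simp [hab]
  rw [Multiset.count_map] at hc
  have h2 : Fintype.card {i // ev i = a} = n := by
    rw [Fintype.card_subtype]
    rw [show (Finset.univ.filter fun i => ev i = a) = Finset.filter (fun i => a = ev i) Finset.univ
      by ext i; simp [eq_comm]]
    exact hc
  have h3 := Fintype.card_subtype_compl (fun i => ev i = a)
  simp only [h2, hcard] at h3
  convert h3 using 2
  omega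

lemma aux_rank_submatrix_le {I : Type*} [Fintype I] (A : Matrix N N ℝ) (f g : I → N) :
    (A.submatrix f g).rank ≤ A.rank := by
  classical
  have hfac : A.submatrix f g =
      (Matrix.of fun i c => if c = f i then (1:ℝ) else 0) * A *
        (Matrix.of fun c j => if c = g j then (1:ℝ) else 0) := by
    ext i j
    simp [Matrix.mul_apply, ite_mul, mul_ite]
  rw [hfac]
  exact (Matrix.rank_mul_le_left _ _).trans (Matrix.rank_mul_le_right _ _)

end Aux

/-- Extend a graph on `Fin k` to a graph on `Fin n` (for `k ≤ n`), keeping the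
induced subgraph on the first `k` vertices and joining everything else completely. -/
def extGraph {k n : ℕ} (G' : SimpleGraph (Fin k)) (h : k ≤ n) : SimpleGraph (Fin n) where
  Adj i j := i ≠ j ∧ ∀ a b : Fin k, i = Fin.castLE h a → j = Fin.castLE h b → G'.Adj a b
  symm := ⟨fun _ _ ⟨hne, h2⟩ => ⟨hne.symm, fun a b ha hb => (h2 b a hb ha).symm⟩⟩
  loopless := ⟨fun _ h => h.1 rfl⟩

lemma extGraph_adj_castLE {k n : ℕ} (G' : SimpleGraph (Fin k)) (h : k ≤ n) (a b : Fin k) :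
    (extGraph G' h).Adj (Fin.castLE h a) (Fin.castLE h b) ↔ G'.Adj a b := by
  constructor
  · exact fun ⟨_, h2⟩ => h2 a b rfl rfl
  · intro hadj
    refine ⟨fun hEq => ?_, fun a' b' ha hb => ?_⟩
    · exact G'.loopless.irrefl a (by
        have : a = b := Fin.castLE_injective h hEq
        exact this ▸ hadj)
    · have ha' : a = a' := Fin.castLE_injective h ha
      have hb' : b = b' := Fin.castLE_injective h hb
      exact ha' ▸ hb' ▸ hadj

lemma extGraph_connected {k n : ℕ} (G' : SimpleGraph (Fin k)) (h : k < n) :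
    (extGraph G' h.le).Connected := by
  have hn : 0 < n := lt_of_le_of_lt (Nat.zero_le _) h
  set v : Fin n := ⟨n - 1, by omega⟩ with hv
  have hvnot : ∀ a : Fin k, v ≠ Fin.castLE h.le a := by
    intro a hEq
    have := congrArg Fin.val hEq
    simp only [hv, Fin.castLE] at this
    have := a.2
    omega
  have hadj : ∀ u : Fin n, u ≠ v → (extGraph G' h.le).Adj v u := by
    intro u hu
    exact ⟨hu.symm, fun a b ha _ => absurd ha (hvnot a)⟩
  rw [SimpleGraph.connected_iff]
  refine ⟨fun x y => ?_, ⟨v⟩⟩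
  have key : ∀ z : Fin n, (extGraph G' h.le).Reachable z v := by
    intro z
    by_cases hz : z = v
    · exact hz ▸ SimpleGraph.Reachable.refl _
    · exact ((hadj z hz).symm).reachable
  exact (key x).trans (key y).symm

theorem stmt12 (n ℓ : ℕ) (h1 : 1 ≤ ℓ) (h2 : ℓ < n)
    (G : SimpleGraph (Fin n)) (G' : SimpleGraph (Fin (n - ℓ)))
    (hG : G.Connected) (hG' : G'.Connected)
    (hjoin : ∀ (m : ℕ) (H H' : SimpleGraph (Fin m)), H.Connected → H'.Connected →
      ∃ (M : Matrix (Fin m ⊕ Fin m) (Fin m ⊕ Fin m) ℝ) (a b : ℝ),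
        inS (joinGraph H H') M ∧ a < b ∧
        M.charpoly = (X - C a) ^ m * (X - C b) ^ m) :
    qGraph (joinGraph G G') ≤ 2 + ℓ := by
  classical
  have hkn : n - ℓ < n := by omega
  set H' : SimpleGraph (Fin n) := extGraph G' hkn.le with hH'
  obtain ⟨M, a, b, hMS, hab, hcp⟩ := hjoin n G H' hG (extGraph_connected G' hkn)
  have hherm : M.IsHermitian := by
    rw [Matrix.IsHermitian, Matrix.conjTranspose_eq_transpose_of_trivial]
    exact hMS.1
  set ev := hherm.eigenvalues with hev
  have hcardN : Fintype.card (Fin n ⊕ Fin n) = n + n := by simp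
  have hmult : Finset.univ.val.map ev = n • {a} + n • {b} := aux_ev_multiset hherm hcp
  have hmult' : Finset.univ.val.map ev = n • {b} + n • {a} := by rw [hmult, add_comm]
  have hcarda : Fintype.card {i // ev i ≠ a} = n := aux_card_ne hcardN ev hab.ne hmult
  have hcardb : Fintype.card {i // ev i ≠ b} = n := aux_card_ne hcardN ev hab.ne' hmult'
  have hranka : (M - a • 1).rank = n := (aux_rank_sub_smul hherm a).trans hcarda
  have hrankb : (M - b • 1).rank = n := (aux_rank_sub_smul hherm b).trans hcardb
  -- the principal submatrix
  set e : Fin (n - ℓ) → Fin n := Fin.castLE hkn.le with he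
  set inc : (Fin n ⊕ Fin (n - ℓ)) → (Fin n ⊕ Fin n) := Sum.map id e with hinc
  have hinj : Function.Injective inc :=
    Function.Injective.sumMap Function.injective_id (Fin.castLE_injective _)
  set B : Matrix (Fin n ⊕ Fin (n - ℓ)) (Fin n ⊕ Fin (n - ℓ)) ℝ := M.submatrix inc inc with hB
  have hBsymm : B.IsSymm := by
    rw [Matrix.IsSymm, hB, Matrix.transpose_submatrix, hMS.1]
  have hBinS : inS (joinGraph G G') B := by
    refine ⟨hBsymm, ?_⟩
    rintro (x | x) (y | y) hij
    · have hxy : x ≠ y := fun h => hij (h ▸ rfl)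
      have := hMS.2 (Sum.inl x) (Sum.inl y) (by simp [hxy])
      exact this
    · have := hMS.2 (Sum.inl x) (Sum.inr (e y)) (by simp)
      exact this
    · have := hMS.2 (Sum.inr (e x)) (Sum.inl y) (by simp)
      exact this
    · have hxy : x ≠ y := fun h => hij (h ▸ rfl)
      have hkey := hMS.2 (Sum.inr (e x)) (Sum.inr (e y))
        (by simp [he, (Fin.castLE_injective hkn.le).ne_iff, hxy])
      have hadj : H'.Adj (e x) (e y) ↔ G'.Adj x y := extGraph_adj_castLE G' hkn.le x y
      show B (Sum.inr x) (Sum.inr y) ≠ 0 ↔ G'.Adj x y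
      rw [← hadj]
      exact hkey
  -- spectrum and eigenspaces
  set f : Module.End ℝ ((Fin n ⊕ Fin (n - ℓ)) → ℝ) := B.mulVecLin with hf
  have hfeq : (Matrix.toLinAlgEquiv' B : ((Fin n ⊕ Fin (n - ℓ)) → ℝ) →ₗ[ℝ]
      ((Fin n ⊕ Fin (n - ℓ)) → ℝ)) = f := by
    apply LinearMap.ext
    intro v
    rw [Matrix.toLinAlgEquiv'_apply]
    rfl
  have hspec : spectrum ℝ B = spectrum ℝ f := by
    rw [← AlgEquiv.spectrum_eq (Matrix.toLinAlgEquiv' (R := ℝ) (n := Fin n ⊕ Fin (n - ℓ))) B,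
      hfeq]
  have heig : ∀ μ : ℝ, Module.End.eigenspace f μ
      = LinearMap.ker (Matrix.mulVecLin (B - μ • 1)) := by
    intro μ
    ext v
    rw [Module.End.mem_eigenspace_iff, LinearMap.mem_ker]
    show B *ᵥ v = μ • v ↔ (B - μ • 1) *ᵥ v = 0
    rw [Matrix.sub_mulVec, sub_eq_zero, Matrix.smul_mulVec, Matrix.one_mulVec]
  have hdim : ∀ μ : ℝ, (B - μ • 1).rank
      + Module.finrank ℝ (LinearMap.ker (Matrix.mulVecLin (B - μ • 1))) = n + (n - ℓ) := by
    intro μ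
    have := LinearMap.finrank_range_add_finrank_ker (Matrix.mulVecLin (B - μ • 1))
    rw [Module.finrank_fintype_fun_eq_card] at this
    simpa [Matrix.rank] using this
  have hsubrank : ∀ μ : ℝ, (B - μ • 1).rank ≤ (M - μ • 1).rank := by
    intro μ
    have hsub : B - μ • 1 = (M - μ • 1).submatrix inc inc := by
      ext i j
      simp [hB, Matrix.submatrix_apply, Matrix.one_apply, hinj.eq_iff]
    rw [hsub]
    exact aux_rank_submatrix_le _ _ _
  have hkera : n - ℓ ≤ Module.finrank ℝ (Module.End.eigenspace f a) := by
    rw [heig a]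
    have h3 := hdim a
    have h4 := (hsubrank a).trans_eq hranka
    omega
  have hkerb : n - ℓ ≤ Module.finrank ℝ (Module.End.eigenspace f b) := by
    rw [heig b]
    have h3 := hdim b
    have h4 := (hsubrank b).trans_eq hrankb
    omega
  -- membership of a and b in the spectrum
  have hne_bot : ∀ μ : ℝ, n - ℓ ≤ Module.finrank ℝ (Module.End.eigenspace f μ) →
      μ ∈ spectrum ℝ B := by
    intro μ hμ
    rw [hspec]
    rw [← Module.End.hasEigenvalue_iff_mem_spectrum]
    rw [Module.End.hasEigenvalue_iff]
    intro hbot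
    rw [hbot] at hμ
    simp only [finrank_bot] at hμ
    omega
  have hamem : a ∈ spectrum ℝ B := hne_bot a hkera
  have hbmem : b ∈ spectrum ℝ B := hne_bot b hkerb
  -- counting distinct eigenvalues
  have hfin : (spectrum ℝ B).Finite := Matrix.finite_spectrum B
  set t : Finset ℝ := hfin.toFinset with ht
  have hncard : (spectrum ℝ B).ncard = t.card := Set.ncard_eq_toFinset_card _ hfin
  have hat : a ∈ t := hfin.mem_toFinset.mpr hamem
  have hbt : b ∈ t := hfin.mem_toFinset.mpr hbmem
  have hbt' : b ∈ t.erase a := Finset.mem_erase.mpr ⟨hab.ne', hbt⟩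
  have hone : ∀ μ ∈ t, 1 ≤ Module.finrank ℝ (Module.End.eigenspace f μ) := by
    intro μ hμ
    have hμs : μ ∈ spectrum ℝ f := by rw [← hspec]; exact hfin.mem_toFinset.mp hμ
    have hev' : f.HasEigenvalue μ := Module.End.HasEigenvalue.of_mem_spectrum hμs
    have hnb : Module.End.eigenspace f μ ≠ ⊥ := Module.End.hasEigenvalue_iff.mp hev'
    have : Module.finrank ℝ (Module.End.eigenspace f μ) ≠ 0 := by
      intro h0
      exact hnb (Submodule.finrank_eq_zero.mp h0)
    omega
  have hsum : ∑ μ ∈ t, Module.finrank ℝ (Module.End.eigenspace f μ) ≤ n + (n - ℓ) := by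
    have := aux_sum_finrank_le (Module.End.eigenspaces_iSupIndep f) t
    rwa [Module.finrank_fintype_fun_eq_card, Fintype.card_sum, Fintype.card_fin,
      Fintype.card_fin] at this
  have hsplit1 : Module.finrank ℝ (Module.End.eigenspace f a)
      + ∑ μ ∈ t.erase a, Module.finrank ℝ (Module.End.eigenspace f μ)
      = ∑ μ ∈ t, Module.finrank ℝ (Module.End.eigenspace f μ) :=
    Finset.add_sum_erase t (fun μ => Module.finrank ℝ (Module.End.eigenspace f μ)) hat
  have hsplit2 : Module.finrank ℝ (Module.End.eigenspace f b)
      + ∑ μ ∈ (t.erase a).erase b, Module.finrank ℝ (Module.End.eigenspace f μ)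
      = ∑ μ ∈ t.erase a, Module.finrank ℝ (Module.End.eigenspace f μ) :=
    Finset.add_sum_erase _ (fun μ => Module.finrank ℝ (Module.End.eigenspace f μ)) hbt'
  have hcard_u : ((t.erase a).erase b).card = t.card - 1 - 1 := by
    rw [Finset.card_erase_of_mem hbt', Finset.card_erase_of_mem hat]
  have hlow : ((t.erase a).erase b).card
      ≤ ∑ μ ∈ (t.erase a).erase b, Module.finrank ℝ (Module.End.eigenspace f μ) := by
    refine Finset.card_nsmul_le_sum _ _ 1 ?_ |>.trans_eq' (by simp)
    intro μ hμ
    exact hone μ (Finset.mem_of_mem_erase (Finset.mem_of_mem_erase hμ))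
  have hcardt2 : 2 ≤ t.card := by
    have : ({a, b} : Finset ℝ) ⊆ t := by
      intro x hx
      rcases Finset.mem_insert.mp hx with h | h
      · exact h ▸ hat
      · exact (Finset.mem_singleton.mp h) ▸ hbt
    calc 2 = ({a, b} : Finset ℝ).card := by rw [Finset.card_insert_of_notMem (by simp [hab.ne]),
        Finset.card_singleton]
    _ ≤ t.card := Finset.card_le_card this
  have hcardle : t.card ≤ 2 + ℓ := by omega
  -- conclude
  have hmem : (spectrum ℝ B).ncard ∈
      {k : ℕ | ∃ A : Matrix (Fin n ⊕ Fin (n - ℓ)) (Fin n ⊕ Fin (n - ℓ)) ℝ,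
        inS (joinGraph G G') A ∧ (spectrum ℝ A).ncard = k} := ⟨B, hBinS, rfl⟩
  exact (Nat.sInf_le hmem).trans (by rw [hncard]; exact hcardle)
end

section
/- There is no 6×6 real symmetric orthogonal matrix whose off-diagonal zero–nonzero pattern is that of the wheel W₆ on 6 vertices (a 5-cycle on vertices 1..5 plus a hub vertex 6 adjacent to all). Consequently q(W₆) ≥ 3. -/
set_option maxHeartbeats 1000000

open Matrix

/-- The wheel on 6 vertices: a 5-cycle on vertices 0,…,4 plus a hub 5 adjacent to all. -/
def wheel6 : SimpleGraph (Fin 6) :=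
  SimpleGraph.fromRel (fun i j => (i, j) ∈
    ([(0,1),(1,2),(2,3),(3,4),(4,0),(0,5),(1,5),(2,5),(3,5),(4,5)] : List (Fin 6 × Fin 6)))

lemma wheel6_adj_iff (i j : Fin 6) : wheel6.Adj i j ↔ (i ≠ j ∧
    ((i, j) ∈ ([(0,1),(1,2),(2,3),(3,4),(4,0),(0,5),(1,5),(2,5),(3,5),(4,5)] : List (Fin 6 × Fin 6))
    ∨ (j, i) ∈ ([(0,1),(1,2),(2,3),(3,4),(4,0),(0,5),(1,5),(2,5),(3,5),(4,5)] : List (Fin 6 × Fin 6)))) :=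
  SimpleGraph.fromRel_adj _ i j

lemma part1 : ¬ ∃ M : Matrix (Fin 6) (Fin 6) ℝ, inS wheel6 M ∧ M * M = 1 := by
  rintro ⟨M, ⟨hsym, hpat⟩, hM2⟩
  have hz : ∀ i j : Fin 6, i ≠ j → ¬ wheel6.Adj i j → M i j = 0 := by
    intro i j hne hadj
    by_contra h
    exact hadj ((hpat i j hne).1 h)
  have hnz : ∀ i j : Fin 6, wheel6.Adj i j → M i j ≠ 0 := by
    intro i j hadj
    exact (hpat i j hadj.ne).2 hadj
  -- nonzero entries
  have n01 : M 0 1 ≠ 0 := hnz 0 1 (by rw [wheel6_adj_iff]; decide)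
  have n12 : M 1 2 ≠ 0 := hnz 1 2 (by rw [wheel6_adj_iff]; decide)
  have n23 : M 2 3 ≠ 0 := hnz 2 3 (by rw [wheel6_adj_iff]; decide)
  have n34 : M 3 4 ≠ 0 := hnz 3 4 (by rw [wheel6_adj_iff]; decide)
  have n40 : M 4 0 ≠ 0 := hnz 4 0 (by rw [wheel6_adj_iff]; decide)
  have n05 : M 0 5 ≠ 0 := hnz 0 5 (by rw [wheel6_adj_iff]; decide)
  have n15 : M 1 5 ≠ 0 := hnz 1 5 (by rw [wheel6_adj_iff]; decide)
  have n25 : M 2 5 ≠ 0 := hnz 2 5 (by rw [wheel6_adj_iff]; decide)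
  have n35 : M 3 5 ≠ 0 := hnz 3 5 (by rw [wheel6_adj_iff]; decide)
  have n45 : M 4 5 ≠ 0 := hnz 4 5 (by rw [wheel6_adj_iff]; decide)
  -- zero entries (non-edges among distinct vertices): pairs at distance 2 on the cycle
  have z02 : M 0 2 = 0 := hz 0 2 (by decide) (by rw [wheel6_adj_iff]; decide)
  have z03 : M 0 3 = 0 := hz 0 3 (by decide) (by rw [wheel6_adj_iff]; decide)
  have z13 : M 1 3 = 0 := hz 1 3 (by decide) (by rw [wheel6_adj_iff]; decide)
  have z14 : M 1 4 = 0 := hz 1 4 (by decide) (by rw [wheel6_adj_iff]; decide)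
  have z24 : M 2 4 = 0 := hz 2 4 (by decide) (by rw [wheel6_adj_iff]; decide)
  have z20 : M 2 0 = 0 := by rw [hsym.apply]; exact z02
  have z30 : M 3 0 = 0 := by rw [hsym.apply]; exact z03
  have z31 : M 3 1 = 0 := by rw [hsym.apply]; exact z13
  have z41 : M 4 1 = 0 := by rw [hsym.apply]; exact z14
  have z42 : M 4 2 = 0 := by rw [hsym.apply]; exact z24
  -- symmetric relations for nonzero positions
  have s10 : M 1 0 = M 0 1 := hsym.apply 0 1
  have s21 : M 2 1 = M 1 2 := hsym.apply 1 2
  have s32 : M 3 2 = M 2 3 := hsym.apply 2 3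
  have s43 : M 4 3 = M 3 4 := hsym.apply 3 4
  have s04 : M 0 4 = M 4 0 := hsym.apply 4 0
  have s50 : M 5 0 = M 0 5 := hsym.apply 0 5
  have s51 : M 5 1 = M 1 5 := hsym.apply 1 5
  have s52 : M 5 2 = M 2 5 := hsym.apply 2 5
  have s53 : M 5 3 = M 3 5 := hsym.apply 3 5
  have s54 : M 5 4 = M 4 5 := hsym.apply 4 5
  -- the five distance-2 equations
  have e02 := congrFun (congrFun hM2 0) 2
  have e13 := congrFun (congrFun hM2 1) 3
  have e24 := congrFun (congrFun hM2 2) 4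
  have e30 := congrFun (congrFun hM2 3) 0
  have e41 := congrFun (congrFun hM2 4) 1
  simp only [Matrix.mul_apply, Fin.sum_univ_six, Matrix.one_apply, if_neg,
    show (0:Fin 6) ≠ 2 by decide, show (1:Fin 6) ≠ 3 by decide,
    show (2:Fin 6) ≠ 4 by decide, show (3:Fin 6) ≠ 0 by decide,
    show (4:Fin 6) ≠ 1 by decide, if_false, reduceIte] at e02 e13 e24 e30 e41
  simp only [z02, z03, z13, z14, z24, z20, z30, z31, z41, z42,
    s10, s21, s32, s43, s04, s50, s51, s52, s53, s54] at e02 e13 e24 e30 e41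
  ring_nf at e02 e13 e24 e30 e41
  set a0 := M 0 1; set a1 := M 1 2; set a2 := M 2 3; set a3 := M 3 4; set a4 := M 4 0
  set b0 := M 0 5; set b1 := M 1 5; set b2 := M 2 5; set b3 := M 3 5; set b4 := M 4 5
  have key : (b0*b1*b2*b3*b4)^2 + (a0*a1*a2*a3*a4)^2 = 0 := by
    linear_combination (b1*b3)*(b2*b4)*(b3*b0)*(b4*b1) * e02
      + (-(a0*a1))*(b2*b4)*(b3*b0)*(b4*b1) * e13
      + ((a0*a1)*(a1*a2))*(b3*b0)*(b4*b1) * e24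
      + (-((a0*a1)*(a1*a2)*(a2*a3)))*(b4*b1) * e30
      + ((a0*a1)*(a1*a2)*(a2*a3)*(a3*a4)) * e41
  have hb : b0*b1*b2*b3*b4 ≠ 0 :=
    mul_ne_zero (mul_ne_zero (mul_ne_zero (mul_ne_zero n05 n15) n25) n35) n45
  have hsq : (b0*b1*b2*b3*b4)^2 = 0 := by nlinarith [sq_nonneg (a0*a1*a2*a3*a4), sq_nonneg (b0*b1*b2*b3*b4)]
  exact hb (sq_eq_zero_iff.mp hsq)

lemma pair_cover (s : Set ℝ) (hs : s.Finite) (h : s.ncard ≤ 2) :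
    ∃ a b : ℝ, a ≠ b ∧ s ⊆ {a, b} := by
  have h3 : s.ncard = 0 ∨ s.ncard = 1 ∨ s.ncard = 2 := by omega
  rcases h3 with h0 | h1 | h2
  · exact ⟨0, 1, by norm_num, by rw [(Set.ncard_eq_zero hs).mp h0]; exact Set.empty_subset _⟩
  · obtain ⟨a, rfl⟩ := Set.ncard_eq_one.mp h1
    exact ⟨a, a + 1, by simp, by simp⟩
  · obtain ⟨a, b, hab, rfl⟩ := Set.ncard_eq_two.mp h2
    exact ⟨a, b, hab, subset_rfl⟩

lemma ann {n : Type*} [Fintype n] [DecidableEq n] {A : Matrix n n ℝ} (hA : A.IsHermitian)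
    {l m : ℝ} (h : ∀ i, (hA.eigenvalues i - l) * (hA.eigenvalues i - m) = 0) :
    (A - l • 1) * (A - m • 1) = 0 := by
  set U : Matrix n n ℝ := (hA.eigenvectorUnitary : Matrix n n ℝ) with hUdef
  have hU1 : U * star U = 1 := Matrix.mem_unitaryGroup_iff.mp hA.eigenvectorUnitary.2
  have hU2 : star U * U = 1 := Matrix.mem_unitaryGroup_iff'.mp hA.eigenvectorUnitary.2
  have hdiag : Matrix.diagonal (RCLike.ofReal ∘ hA.eigenvalues) = Matrix.diagonal hA.eigenvalues := by
    congr 1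
  have key : ∀ c : ℝ, A - c • 1 = U * (Matrix.diagonal (fun i => hA.eigenvalues i - c)) * star U := by
    intro c
    have h1 : c • (1 : Matrix n n ℝ) = U * (c • 1) * star U := by
      rw [Matrix.mul_smul, mul_one, Matrix.smul_mul, hU1]
    have h2 : Matrix.diagonal hA.eigenvalues - c • 1 =
        Matrix.diagonal (fun i => hA.eigenvalues i - c) := by
      ext i j
      by_cases hij : i = j <;>
        simp [Matrix.diagonal_apply, hij, Matrix.one_apply]
    conv_lhs => rw [hA.spectral_theorem, hdiag, Unitary.conjStarAlgAut_apply, ← hUdef, h1]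
    rw [← Matrix.sub_mul, ← Matrix.mul_sub, h2]
  have cancel : ∀ D1 D2 : Matrix n n ℝ,
      (U * D1 * star U) * (U * D2 * star U) = U * (D1 * D2) * star U := by
    intro D1 D2
    calc (U * D1 * star U) * (U * D2 * star U)
        = U * D1 * (star U * U) * (D2 * star U) := by simp only [mul_assoc]
      _ = U * (D1 * D2) * star U := by rw [hU2]; simp only [mul_assoc, one_mul]
  rw [key l, key m, cancel, Matrix.diagonal_mul_diagonal]
  have : (fun i => (hA.eigenvalues i - l) * (hA.eigenvalues i - m)) = fun _ => (0 : ℝ) := by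
    funext i; exact h i
  rw [this]
  simp

lemma step {A : Matrix (Fin 6) (Fin 6) ℝ} (hs : A.IsSymm) (hc : (spectrum ℝ A).ncard ≤ 2) :
    ∃ M : Matrix (Fin 6) (Fin 6) ℝ, M.IsSymm ∧
      (∀ i j, i ≠ j → (M i j ≠ 0 ↔ A i j ≠ 0)) ∧ M * M = 1 := by
  have hA : A.IsHermitian := by
    rw [Matrix.IsHermitian, Matrix.conjTranspose_eq_transpose_of_trivial]; exact hs
  obtain ⟨l, m, hlm, hsub⟩ := pair_cover _ A.finite_spectrum hc
  have hzero : (A - l • 1) * (A - m • 1) = 0 := by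
    refine ann hA fun i => ?_
    have hmem := hsub (hA.eigenvalues_mem_spectrum_real i)
    rcases hmem with h | h
    · rw [h]; ring
    · rw [Set.mem_singleton_iff.mp h]; ring
  have hne : (l - m) ≠ 0 := sub_ne_zero.mpr hlm
  refine ⟨(l - m)⁻¹ • ((2:ℝ) • A - (l + m) • 1), ?_, ?_, ?_⟩
  · simp [Matrix.IsSymm, Matrix.transpose_smul, Matrix.transpose_sub, hs.eq]
  · intro i j hij
    simp only [Matrix.smul_apply, Matrix.sub_apply, Matrix.smul_apply,
      Matrix.one_apply_ne hij, smul_eq_mul, mul_zero, sub_zero]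
    constructor
    · intro h hA0
      exact h (by rw [hA0]; ring)
    · intro h
      exact mul_ne_zero (inv_ne_zero hne) (mul_ne_zero two_ne_zero h)
  · have expand : ((2:ℝ) • A - (l + m) • 1) * ((2:ℝ) • A - (l + m) • 1)
        = ((l - m) * (l - m)) • (1 : Matrix (Fin 6) (Fin 6) ℝ)
          + (4:ℝ) • ((A - l • 1) * (A - m • 1)) := by
      simp only [Matrix.sub_mul, Matrix.mul_sub, smul_mul_assoc, mul_smul_comm,
        smul_smul, one_mul, mul_one]
      module
    rw [smul_mul_assoc, mul_smul_comm, smul_smul, expand, hzero, smul_zero, add_zero,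
      smul_smul]
    have : (l - m)⁻¹ * (l - m)⁻¹ * ((l - m) * (l - m)) = 1 := by
      field_simp
    rw [this, one_smul]

theorem stmt13 :
    (¬ ∃ M : Matrix (Fin 6) (Fin 6) ℝ, inS wheel6 M ∧ M * M = 1) ∧
      3 ≤ qGraph wheel6 := by
  refine ⟨part1, ?_⟩
  unfold qGraph
  classical
  apply le_csInf
  · refine ⟨(spectrum ℝ (Matrix.of fun i j => if wheel6.Adj i j then (1:ℝ) else 0)).ncard,
      Matrix.of fun i j => if wheel6.Adj i j then (1:ℝ) else 0, ⟨?_, ?_⟩, rfl⟩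
    · apply Matrix.IsSymm.ext
      intro i j
      exact if_congr (wheel6.adj_comm j i) rfl rfl
    · intro i j hij
      by_cases h : wheel6.Adj i j <;> simp [h]
  · rintro k ⟨A, hin, rfl⟩
    by_contra hk
    push_neg at hk
    obtain ⟨M, hMs, hMp, hM2⟩ := step hin.1 (by omega)
    exact part1 ⟨M, ⟨hMs, fun i j hij => (hMp i j hij).trans (hin.2 i j hij)⟩, hM2⟩
end

section
/- For s≥2, the Cartesian product P_s□P₂ satisfies q(P_s□P₂)=s: it is at least s because there is a unique shortest path of length s−1 between opposite corner vertices (and q ≥ d+1 for a unique shortest path of length d), and at most s because P_s□P₂ has a Hamilton cycle on 2s vertices and any graph of order m with a Hamilton cycle has q ≤ ⌈m/2⌉. -/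
open Matrix

section Stmt15Aux

open SimpleGraph

namespace Stmt15Aux

def walkOfFn {V : Type} {G : SimpleGraph V} (f : ℕ → V) :
    (a : ℕ) → (n : ℕ) → (∀ k, k < n → G.Adj (f (a + k)) (f (a + k + 1))) → G.Walk (f a) (f (a + n))
  | _, 0, _ => SimpleGraph.Walk.nil
  | a, n + 1, h =>
    (SimpleGraph.Walk.cons (h 0 n.succ_pos)
      (walkOfFn f (a + 1) n (fun k hk => by
        have e1 : a + 1 + k = a + (k + 1) := by omega
        rw [e1]; exact h (k + 1) (by omega)))).copy rfl (congrArg f (by omega))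

lemma walkOfFn_length {V : Type} {G : SimpleGraph V} (f : ℕ → V) :
    ∀ (a n : ℕ) (h : ∀ k, k < n → G.Adj (f (a + k)) (f (a + k + 1))),
      (walkOfFn f a n h).length = n := by
  intro a n
  induction n generalizing a with
  | zero => intro h; simp [walkOfFn]
  | succ n ih => intro h; simp [walkOfFn, ih]

lemma walkOfFn_support {V : Type} {G : SimpleGraph V} (f : ℕ → V) :
    ∀ (a n : ℕ) (h : ∀ k, k < n → G.Adj (f (a + k)) (f (a + k + 1))),
      (walkOfFn f a n h).support = (List.range (n + 1)).map (fun k => f (a + k)) := by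
  intro a n
  induction n generalizing a with
  | zero => intro h; simp [walkOfFn, List.range_succ]
  | succ n ih =>
    intro h
    simp only [walkOfFn, Walk.support_copy, Walk.support_cons, ih]
    conv_rhs => rw [List.range_succ_eq_map, List.map_cons, List.map_map]
    refine congrArg₂ List.cons rfl (List.map_congr_left ?_)
    intro k _
    simp only [Function.comp_apply]
    congr 1
    omega

lemma walkOfFn_edges {V : Type} {G : SimpleGraph V} (f : ℕ → V) :
    ∀ (a n : ℕ) (h : ∀ k, k < n → G.Adj (f (a + k)) (f (a + k + 1))),
      (walkOfFn f a n h).edges = (List.range n).map (fun k => s(f (a + k), f (a + k + 1))) := by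
  intro a n
  induction n generalizing a with
  | zero => intro h; simp [walkOfFn]
  | succ n ih =>
    intro h
    simp only [walkOfFn, Walk.edges_copy, Walk.edges_cons, ih]
    conv_rhs => rw [List.range_succ_eq_map, List.map_cons, List.map_map]
    refine congrArg₂ List.cons rfl (List.map_congr_left ?_)
    intro k _
    simp only [Function.comp_apply]
    have e1 : a + 1 + k = a + (k + 1) := by omega
    rw [e1]

variable (s : ℕ)

abbrev GG (s : ℕ) : SimpleGraph (Fin s × Fin 2) :=
  (SimpleGraph.pathGraph s).boxProd (SimpleGraph.pathGraph 2)

/-! ### Hamiltonian cycle -/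

/-- the cyclic enumeration of the grid -/
def f (hs : 2 ≤ s) (k : ℕ) : Fin s × Fin 2 :=
  if h : k < s then (⟨k, h⟩, 0)
  else if h2 : k < 2 * s then (⟨2 * s - 1 - k, by omega⟩, 1)
  else (⟨0, by omega⟩, 0)

lemma f_inj (hs : 2 ≤ s) : ∀ i j, i ≤ 2 * s → j ≤ 2 * s → f s hs i = f s hs j →
    i = j ∨ (i = 0 ∧ j = 2 * s) ∨ (i = 2 * s ∧ j = 0) := by
  intro i j hi hj hf
  unfold f at hf
  split_ifs at hf <;>
    simp only [Prod.ext_iff, Fin.ext_iff, Fin.val_zero, Fin.val_one] at hf <;> omega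

lemma f_adj (hs : 2 ≤ s) : ∀ k, k < 2 * s → (GG s).Adj (f s hs k) (f s hs (k + 1)) := by
  intro k hk
  unfold f
  split_ifs with h1 h2 h3 h4 h5 <;> rw [boxProd_adj] <;>
    simp only [pathGraph_adj, Fin.ext_iff, Fin.val_zero, Fin.val_one, Fin.isValue] <;>
    simp only [true_or, or_true, true_and, and_true] <;> omega

lemma f_eq_bot (hs : 2 ≤ s) (k : ℕ) (hk : k < s) : f s hs k = (⟨k, hk⟩, 0) := by
  simp [f, hk]

lemma f_eq_top (hs : 2 ≤ s) (k : ℕ) (h1 : s ≤ k) (h2 : k < 2 * s) :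
    f s hs k = (⟨2 * s - 1 - k, by omega⟩, 1) := by
  simp [f, h2, Nat.not_lt.mpr h1]

lemma f_eq_last (hs : 2 ≤ s) (k : ℕ) (h1 : 2 * s ≤ k) : f s hs k = (⟨0, by omega⟩, 0) := by
  have h2 : ¬ k < 2 * s := by omega
  have h3 : ¬ k < s := by omega
  simp [f, h2, h3]

lemma f_surj (hs : 2 ≤ s) (v : Fin s × Fin 2) : ∃ k, k < 2 * s ∧ f s hs (k + 1) = v := by
  obtain ⟨i, j⟩ := v
  have hi : (i : ℕ) < s := i.isLt
  have hj : (j : ℕ) < 2 := j.isLt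
  by_cases hj0 : (j : ℕ) = 0
  · by_cases hi0 : (i : ℕ) = 0
    · refine ⟨2 * s - 1, by omega, ?_⟩
      rw [show 2 * s - 1 + 1 = 2 * s by omega, f_eq_last s hs _ le_rfl]
      simp only [Prod.ext_iff, Fin.ext_iff, Fin.val_zero, true_and, and_true]
      omega
    · refine ⟨(i : ℕ) - 1, by omega, ?_⟩
      rw [show (i : ℕ) - 1 + 1 = (i : ℕ) by omega, f_eq_bot s hs _ hi]
      simp only [Prod.ext_iff, Fin.ext_iff, Fin.val_zero, true_and, and_true]
      omega
  · refine ⟨2 * s - 2 - (i : ℕ), by omega, ?_⟩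
    rw [show 2 * s - 2 - (i : ℕ) + 1 = 2 * s - 1 - (i : ℕ) by omega,
      f_eq_top s hs _ (by omega) (by omega)]
    simp only [Prod.ext_iff, Fin.ext_iff, Fin.val_one, true_and, and_true]
    omega

lemma f_last' (hs : 2 ≤ s) : f s hs (0 + 2 * s) = f s hs 0 := by
  rw [f_eq_last s hs _ (by omega), f_eq_bot s hs 0 (by omega)]

noncomputable def hamWalk (hs : 2 ≤ s) : (GG s).Walk (f s hs 0) (f s hs 0) :=
  (walkOfFn (f s hs) 0 (2 * s) (fun k hk => by
    simp only [Nat.zero_add]; exact f_adj s hs k hk)).copy rfl (f_last' s hs)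

lemma hamWalk_support (hs : 2 ≤ s) :
    (hamWalk s hs).support = (List.range (2 * s + 1)).map (f s hs) := by
  rw [hamWalk, Walk.support_copy, walkOfFn_support]
  exact List.map_congr_left (fun k _ => by rw [Nat.zero_add])

lemma hamWalk_support_tail (hs : 2 ≤ s) :
    (hamWalk s hs).support.tail = (List.range (2 * s)).map (fun k => f s hs (k + 1)) := by
  rw [hamWalk_support, List.range_succ_eq_map, List.map_cons, List.tail_cons, List.map_map]
  exact List.map_congr_left (fun k _ => by simp [Nat.add_comm])

lemma hamWalk_tail_nodup (hs : 2 ≤ s) : (hamWalk s hs).support.tail.Nodup := by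
  rw [hamWalk_support_tail]
  refine List.Nodup.map_on ?_ List.nodup_range
  intro x hx y hy hxy
  rw [List.mem_range] at hx hy
  rcases f_inj s hs (x + 1) (y + 1) (by omega) (by omega) hxy with h | h | h <;> omega

lemma hamWalk_isHamiltonianCycle (hs : 2 ≤ s) : (hamWalk s hs).IsHamiltonianCycle := by
  rw [Walk.isHamiltonianCycle_iff_isCycle_and_support_count_tail_eq_one]
  constructor
  · rw [Walk.isCycle_def]
    refine ⟨⟨?_⟩, ?_, hamWalk_tail_nodup s hs⟩
    · rw [hamWalk, Walk.edges_copy, walkOfFn_edges]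
      refine List.Nodup.map_on ?_ List.nodup_range
      intro x hx y hy hxy
      rw [List.mem_range] at hx hy
      simp only [Nat.zero_add, Sym2.eq_iff] at hxy
      rcases hxy with ⟨h1, h2⟩ | ⟨h1, h2⟩
      · rcases f_inj s hs x y (by omega) (by omega) h1 with h | h | h <;> omega
      · rcases f_inj s hs x (y + 1) (by omega) (by omega) h1 with h | h | h <;>
          rcases f_inj s hs (x + 1) y (by omega) (by omega) h2 with h' | h' | h' <;> omega
    · intro hnil
      have := congrArg Walk.length hnil
      rw [hamWalk, Walk.length_copy, walkOfFn_length, Walk.length_nil] at this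
      omega
  · intro a
    refine @List.count_eq_one_of_mem _ instBEqOfDecidableEq _ _ _ (hamWalk_tail_nodup s hs) ?_
    rw [hamWalk_support_tail]
    obtain ⟨k, hk, hfk⟩ := f_surj s hs a
    exact List.mem_map.mpr ⟨k, List.mem_range.mpr hk, hfk⟩

lemma ham (hs : 2 ≤ s) : ∃ (u : Fin s × Fin 2) (p : (GG s).Walk u u), p.IsHamiltonianCycle :=
  ⟨_, hamWalk s hs, hamWalk_isHamiltonianCycle s hs⟩


def phi (a : Fin s × Fin 2) : ℤ := (a.1 : ℤ) + (a.2 : ℤ)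
def theta (a : Fin s × Fin 2) : ℤ := (a.1 : ℤ) - (a.2 : ℤ)

lemma adj_phi {a b : Fin s × Fin 2} (h : (GG s).Adj a b) : |phi s a - phi s b| ≤ 1 := by
  rw [abs_le]
  rcases boxProd_adj.mp h with ⟨h1, h2⟩ | ⟨h1, h2⟩ <;> rw [pathGraph_adj] at h1 <;>
    have h2' := congrArg Fin.val h2 <;> simp only [phi] <;> omega

lemma adj_theta {a b : Fin s × Fin 2} (h : (GG s).Adj a b) : |theta s a - theta s b| ≤ 1 := by
  rw [abs_le]
  rcases boxProd_adj.mp h with ⟨h1, h2⟩ | ⟨h1, h2⟩ <;> rw [pathGraph_adj] at h1 <;>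
    have h2' := congrArg Fin.val h2 <;> simp only [theta] <;> omega

lemma walk_bound (g : Fin s × Fin 2 → ℤ)
    (hg : ∀ a b, (GG s).Adj a b → |g a - g b| ≤ 1) :
    ∀ {u v : Fin s × Fin 2} (p : (GG s).Walk u v), |g u - g v| ≤ p.length := by
  intro u v p
  induction p with
  | nil => simp
  | @cons u w v h q ih =>
    calc |g u - g v| ≤ |g u - g w| + |g w - g v| := abs_sub_le _ _ _
    _ ≤ 1 + q.length := add_le_add (hg u w h) ih
    _ = ((Walk.cons h q).length : ℤ) := by rw [Walk.length_cons]; push_cast; ring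

def vEnd (hs : 2 ≤ s) : Fin s × Fin 2 := (⟨s - 1, by omega⟩, 0)
def v0 (hs : 2 ≤ s) : Fin s × Fin 2 := (⟨0, by omega⟩, 0)

lemma forced (hs : 2 ≤ s) {u w : Fin s × Fin 2} (h : (GG s).Adj u w) (hu2 : u.2 = (0 : Fin 2))
    (r : (GG s).Walk w (vEnd s hs)) (hr : r.length + (u.1 : ℕ) + 2 = s) :
    (w.1 : ℕ) = (u.1 : ℕ) + 1 ∧ w.2 = (0 : Fin 2) := by
  have hphi := walk_bound s (phi s) (fun a b hab => adj_phi s hab) r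
  have htheta := walk_bound s (theta s) (fun a b hab => adj_theta s hab) r
  rw [abs_le] at hphi htheta
  have hu2' : (u.2 : ℕ) = 0 := by rw [hu2]; rfl
  simp only [phi, theta, vEnd, Fin.val_zero, Nat.cast_zero] at hphi htheta hr
  have hw1 : (w.1 : ℕ) < s := w.1.isLt
  have hw2 : (w.2 : ℕ) < 2 := w.2.isLt
  rcases boxProd_adj.mp h with ⟨h1, h2⟩ | ⟨h1, h2⟩ <;> rw [pathGraph_adj] at h1 <;>
    have h2' := congrArg Fin.val h2
  · refine ⟨by omega, Fin.ext (by omega)⟩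
  · exfalso
    have hw2' : (w.2 : ℕ) = 1 := by omega
    omega

lemma walk_unique (hs : 2 ≤ s) : ∀ (n : ℕ) (u : Fin s × Fin 2)
    (p q : (GG s).Walk u (vEnd s hs)), u.2 = (0 : Fin 2) → p.length = n → q.length = n →
    n + (u.1 : ℕ) + 1 = s → p = q := by
  intro n
  induction n with
  | zero =>
    intro u p q hu2 hp hq hn
    have hu : u = vEnd s hs := by
      refine Prod.ext (Fin.ext ?_) (by rw [hu2]; rfl)
      show (u.1 : ℕ) = ((vEnd s hs).1 : ℕ)
      simp only [vEnd]
      omega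
    subst hu
    rw [(Walk.nil_iff_length_eq.mpr hp).eq_nil, (Walk.nil_iff_length_eq.mpr hq).eq_nil]
  | succ n ih =>
    intro u p q hu2 hp hq hn
    have hp0 : ¬ p.Nil := by rw [Walk.nil_iff_length_eq]; omega
    have hq0 : ¬ q.Nil := by rw [Walk.nil_iff_length_eq]; omega
    obtain ⟨w, hadj, p', rfl⟩ := Walk.not_nil_iff.mp hp0
    obtain ⟨w', hadj', q', rfl⟩ := Walk.not_nil_iff.mp hq0
    rw [Walk.length_cons] at hp hq
    have hw := forced s hs hadj hu2 p' (by omega)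
    have hw' := forced s hs hadj' hu2 q' (by omega)
    have hww : w' = w := Prod.ext (Fin.ext (by omega)) (by rw [hw.2, hw'.2])
    subst hww
    rw [ih _ p' q' hw'.2 (by omega) (by omega) (by
      have := hw'.1
      omega)]

lemma walk_exists (hs : 2 ≤ s) : ∀ (n : ℕ) (u : Fin s × Fin 2), u.2 = (0 : Fin 2) →
    n + (u.1 : ℕ) + 1 = s →
    ∃ p : (GG s).Walk u (vEnd s hs), p.IsPath ∧ p.length = n ∧
      ∀ x ∈ p.support, (u.1 : ℕ) ≤ (x.1 : ℕ) := by
  intro n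
  induction n with
  | zero =>
    intro u hu2 hn
    have hu : u = vEnd s hs := by
      refine Prod.ext (Fin.ext ?_) (by rw [hu2]; rfl)
      show (u.1 : ℕ) = ((vEnd s hs).1 : ℕ)
      simp only [vEnd]
      omega
    subst hu
    exact ⟨Walk.nil, Walk.IsPath.nil, rfl, by simp⟩
  | succ n ih =>
    intro u hu2 hn
    have hlt : (u.1 : ℕ) + 1 < s := by omega
    have hadj : (GG s).Adj u ((⟨(u.1 : ℕ) + 1, hlt⟩ : Fin s), (0 : Fin 2)) := by
      rw [boxProd_adj]
      left
      exact ⟨pathGraph_adj.mpr (Or.inl rfl), by rw [hu2]⟩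
    obtain ⟨p, hp, hl, hsupp⟩ := ih ((⟨(u.1 : ℕ) + 1, hlt⟩ : Fin s), (0 : Fin 2)) rfl (by simp; omega)
    refine ⟨Walk.cons hadj p, ?_, by simp [hl], ?_⟩
    · rw [Walk.cons_isPath_iff]
      refine ⟨hp, fun hmem => ?_⟩
      have h2 : (u.1 : ℕ) + 1 ≤ (u.1 : ℕ) := hsupp u hmem
      omega
    · intro x hx
      rw [Walk.support_cons] at hx
      rcases List.mem_cons.mp hx with rfl | hx
      · exact le_refl _
      · have h2 : (u.1 : ℕ) + 1 ≤ (x.1 : ℕ) := hsupp x hx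
        omega

lemma dist_eq (hs : 2 ≤ s) : (GG s).dist (v0 s hs) (vEnd s hs) = s - 1 := by
  obtain ⟨p, hp, hl, -⟩ := walk_exists s hs (s - 1) (v0 s hs) rfl (by simp [v0]; omega)
  refine le_antisymm (hl ▸ SimpleGraph.dist_le p) ?_
  obtain ⟨q, hq⟩ := (Reachable.exists_walk_length_eq_dist ⟨p⟩ :
    ∃ q : (GG s).Walk (v0 s hs) (vEnd s hs), q.length = (GG s).dist (v0 s hs) (vEnd s hs))
  have hb := walk_bound s (phi s) (fun a b hab => adj_phi s hab) q
  rw [abs_le] at hb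
  simp only [phi, v0, vEnd, Fin.val_zero, Nat.cast_zero] at hb hq ⊢
  omega


lemma unique_path (hs : 2 ≤ s) :
    ∃! p : (GG s).Walk (v0 s hs) (vEnd s hs), p.IsPath ∧ p.length = s - 1 := by
  obtain ⟨p, hp, hl, -⟩ := walk_exists s hs (s - 1) (v0 s hs) rfl (by simp [v0]; omega)
  refine ⟨p, ⟨hp, hl⟩, fun y hy => ?_⟩
  exact walk_unique s hs (s - 1) (v0 s hs) y p rfl hy.2 hl (by simp [v0]; omega)

end Stmt15Aux

end Stmt15Aux

theorem stmt15 (s : ℕ) (hs : 2 ≤ s)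
    -- unique shortest path theorem, assumed as a hypothesis
    (huniq : ∀ (V : Type) [Fintype V] [DecidableEq V] (H : SimpleGraph V) (u v : V) (d : ℕ),
      H.dist u v = d → (∃! p : H.Walk u v, p.IsPath ∧ p.length = d) → d + 1 ≤ qGraph H)
    -- Hamilton cycle bound `q(H) ≤ ⌈|V|/2⌉`, assumed as a hypothesis
    (hham : ∀ (V : Type) [Fintype V] [DecidableEq V] (H : SimpleGraph V),
      (∃ (u : V) (p : H.Walk u u), p.IsHamiltonianCycle) →
        qGraph H ≤ (Fintype.card V + 1) / 2) :
    qGraph ((SimpleGraph.pathGraph s).boxProd (SimpleGraph.pathGraph 2)) = s := by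
  have hq1 : s ≤ qGraph (Stmt15Aux.GG s) := by
    have h := huniq (Fin s × Fin 2) (Stmt15Aux.GG s) (Stmt15Aux.v0 s hs) (Stmt15Aux.vEnd s hs)
      (s - 1) (Stmt15Aux.dist_eq s hs) (Stmt15Aux.unique_path s hs)
    omega
  have hq2 : qGraph (Stmt15Aux.GG s) ≤ s := by
    have h := hham (Fin s × Fin 2) (Stmt15Aux.GG s) (Stmt15Aux.ham s hs)
    have hc : Fintype.card (Fin s × Fin 2) = s * 2 := by simp
    rw [hc] at h
    omega
  exact le_antisymm hq2 hq1
end
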